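/- arXiv:1902.00978 — 6 statements merged into one kernel-verified Lean document; each statement's English description precedes it below -/
import Mathlib

section
/- For nonnegative integers p ≤ n, the p-th derivative of the Eulerian polynomial at t = 1 satisfies A_n^{(p)}(1) = p! · ∑_{k=0}^{p} (-1)^k (n-k)! · S(n, n-k) · C(n-k, p-k), where S denotes Stirling numbers of the second kind and C denotes binomial coefficients. -/
/-- Stirling numbers of the second kind. -/
def stirling2 : ℕ → ℕ → ℕ
  | 0, 0 => 1
  | 0, _ + 1 => 0
  | _ + 1, 0 => 0
  | n + 1, k + 1 => (k + 1) * stirling2 n (k + 1) + stirling2 n k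

/-- The Eulerian polynomial `A_n(t) = ∑_{k=0}^{n} k! S(n,k) t^k (1-t)^{n-k}`. -/
noncomputable def eulerianPoly (n : ℕ) : Polynomial ℝ :=
  ∑ k ∈ Finset.range (n + 1),
    Polynomial.C ((Nat.factorial k * stirling2 n k : ℕ) : ℝ) * Polynomial.X ^ k *
      (1 - Polynomial.X) ^ (n - k)

open Polynomial Finset

/-- `p`-th derivative of `(X - 1)^d` evaluated at `1`. -/
lemma eulerian_aux_base (d p : ℕ) :
    ((derivative^[p] ((X - Polynomial.C 1) ^ d) : Polynomial ℝ)).eval 1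
      = if d = p then (p.factorial : ℝ) else 0 := by
  rw [Polynomial.iterate_derivative_X_sub_pow]
  simp only [eval_smul, eval_pow, eval_sub, eval_X, eval_C, sub_self, smul_eq_mul]
  rcases lt_trichotomy d p with h | h | h
  · simp [Nat.descFactorial_eq_zero_iff_lt.mpr h, h.ne]
  · subst h; simp [Nat.descFactorial_self]
  · rw [if_neg (by omega), zero_pow (by omega : d - p ≠ 0), smul_zero]

/-- `p`-th derivative of `X^k (1 - X)^m` evaluated at `1`. -/
lemma eulerian_aux_term_eval (k m p : ℕ) :
    ((derivative^[p] (X ^ k * (1 - X) ^ m) : Polynomial ℝ)).eval 1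
      = if m ≤ p then (-1 : ℝ) ^ m * p.factorial * (k.choose (p - m)) else 0 := by
  have e0 : (X ^ k * (1 - X) ^ m : Polynomial ℝ)
      = ∑ i ∈ range (k + 1),
          Polynomial.C ((-1 : ℝ) ^ m * (k.choose i : ℝ)) * (X - Polynomial.C 1) ^ (i + m) := by
    have hX : (X : Polynomial ℝ) ^ k = (X - Polynomial.C 1 + 1) ^ k := by norm_num
    have h1 : ((1 : Polynomial ℝ) - X) ^ m = (-1 : Polynomial ℝ) ^ m * (X - Polynomial.C 1) ^ m := by
      rw [← neg_pow]; congr 1; simp [neg_sub]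
    rw [hX, add_pow, h1, Finset.sum_mul]
    refine Finset.sum_congr rfl fun i _ => ?_
    rw [pow_add, map_mul, map_pow, map_neg, map_one]
    simp only [one_pow, mul_one, Polynomial.C_eq_natCast]
    ring
  rw [e0]
  simp only [Polynomial.iterate_derivative_sum, Polynomial.iterate_derivative_C_mul]
  rw [Polynomial.eval_finset_sum]
  simp only [eval_mul, eval_C, eulerian_aux_base]
  by_cases hm : m ≤ p
  · rw [if_pos hm]
    by_cases hk : p - m ≤ k
    · rw [Finset.sum_eq_single (p - m)]
      · rw [if_pos (by omega)]; ring
      · intro b _ hb; rw [if_neg (by omega), mul_zero]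
      · intro h; exact absurd (Finset.mem_range.mpr (by omega)) h
    · rw [Finset.sum_eq_zero, Nat.choose_eq_zero_of_lt (by omega)]
      · simp
      · intro b hb; rw [if_neg (by simp at hb; omega), mul_zero]
  · rw [if_neg hm, Finset.sum_eq_zero]
    intro b hb; rw [if_neg (by omega), mul_zero]

/-- For `p ≤ n`,
`A_n^{(p)}(1) = p! ∑_{k=0}^{p} (-1)^k (n-k)! S(n, n-k) C(n-k, p-k)`. -/
theorem eulerian_iterated_deriv_at_one (n p : ℕ) (hpn : p ≤ n) :
    (Polynomial.derivative^[p] (eulerianPoly n)).eval 1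
      = (Nat.factorial p : ℝ) * ∑ k ∈ Finset.range (p + 1),
          (-1 : ℝ) ^ k * (Nat.factorial (n - k) : ℝ) * (stirling2 n (n - k) : ℝ) *
            (Nat.choose (n - k) (p - k) : ℝ) := by
  unfold eulerianPoly
  simp only [mul_assoc, Polynomial.iterate_derivative_sum, Polynomial.iterate_derivative_C_mul]
  rw [Polynomial.eval_finset_sum]
  simp only [eval_mul, eval_C, eulerian_aux_term_eval]
  rw [← Finset.sum_range_reflect]
  trans (∑ j ∈ range (n + 1), if j ≤ p then ((-1 : ℝ) ^ j * (Nat.factorial (n - j) : ℝ) *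
      (stirling2 n (n - j) : ℝ) * (Nat.choose (n - j) (p - j) : ℝ) * (Nat.factorial p : ℝ))
      else 0)
  · refine Finset.sum_congr rfl fun j hj => ?_
    simp only [Finset.mem_range] at hj
    rw [show n + 1 - 1 - j = n - j from by omega, show n - (n - j) = j from by omega]
    by_cases hjp : j ≤ p
    · rw [if_pos hjp, if_pos hjp]
      push_cast; ring
    · rw [if_neg hjp, if_neg hjp, mul_zero]
  · rw [← Finset.sum_subset (Finset.range_subset_range.mpr (Nat.succ_le_succ hpn))
      (fun x _ hnx => if_neg (by simp only [Finset.mem_range] at hnx; omega))]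
    rw [Finset.mul_sum]
    refine Finset.sum_congr rfl fun j hj => ?_
    simp only [Finset.mem_range] at hj
    rw [if_pos (by omega)]
    ring
end

section
/- For n ≥ 4, if π is chosen uniformly at random from S_n, then the variance of the number of peaks is Var(p(π)) = 2(n+1)/45. -/
/-- The value `π(i)` as a natural number, for a permutation `π ∈ S_n` (0-indexed),
with value `0` outside the range. -/
def permVal (n : ℕ) (π : Equiv.Perm (Fin n)) (i : ℕ) : ℕ :=
  if h : i < n then (π ⟨i, h⟩ : ℕ) else 0

/-- The number of peaks of a permutation `π ∈ S_n`: positions `i` (0-indexed,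
`1 ≤ i ≤ n-2`, corresponding to 1-indexed positions `1 < i < n`) with
`π(i-1) < π(i) > π(i+1)`. -/
def peaks (n : ℕ) (π : Equiv.Perm (Fin n)) : ℕ :=
  ((Finset.Ico 1 (n - 1)).filter fun i =>
    permVal n π (i - 1) < permVal n π i ∧ permVal n π (i + 1) < permVal n π i).card

open Finset Equiv


/-- Core counting lemma: the number of permutations whose values at `k` fixed distinct
positions satisfy an order-type predicate `Q`, times `k!`, equals `n!` times the number
of order types in `S_k` satisfying `Q`. -/
lemma core_count {n k : ℕ} (pos : Fin k → Fin n) (hpos : Function.Injective pos)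
    (Q : (Fin k → ℕ) → Prop) [DecidablePred Q]
    (hQ : ∀ f g : Fin k → ℕ, (∀ a b, f a < f b ↔ g a < g b) → (Q f ↔ Q g)) :
    (Finset.univ.filter fun π : Equiv.Perm (Fin n) => Q fun a => (π (pos a) : ℕ)).card
        * Nat.factorial k
      = Nat.factorial n
        * (Finset.univ.filter fun τ : Equiv.Perm (Fin k) => Q fun a => ((τ a : ℕ))).card := by
  classical
  set c := (Finset.univ.filter fun τ : Equiv.Perm (Fin k) => Q fun a => ((τ a : ℕ))).card with hc
  -- Step A: for every π, the number of τ with Q (π ∘ pos ∘ τ) equals c.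
  have stepA : ∀ π : Equiv.Perm (Fin n),
      (Finset.univ.filter fun τ : Equiv.Perm (Fin k) =>
        Q fun a => (π (pos (τ a)) : ℕ)).card = c := by
    intro π
    set v : Fin k → ℕ := fun a => (π (pos a) : ℕ) with hv
    have hvinj : Function.Injective v := by
      intro a b hab
      exact hpos (π.injective (Fin.val_injective hab))
    set s : Finset ℕ := Finset.univ.image v with hs
    have hcard : s.card = k := by
      rw [hs, Finset.card_image_of_injective _ hvinj, Finset.card_univ, Fintype.card_fin]
    have hmem : ∀ a, v a ∈ s := fun a => Finset.mem_image_of_mem v (Finset.mem_univ a)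
    set σ0 : Fin k → Fin k := fun a => (s.orderIsoOfFin hcard).symm ⟨v a, hmem a⟩ with hσ0
    have hlt : ∀ a b, v a < v b ↔ σ0 a < σ0 b := by
      intro a b
      rw [hσ0]
      simp only [OrderIso.lt_iff_lt, Subtype.mk_lt_mk]
    have hσinj : Function.Injective σ0 := by
      intro a b hab
      have h2 := (s.orderIsoOfFin hcard).symm.injective hab
      exact hvinj (congrArg Subtype.val h2)
    let σ : Equiv.Perm (Fin k) := Equiv.ofBijective σ0 (Finite.injective_iff_bijective.mp hσinj)
    have hσ : ∀ a, σ a = σ0 a := fun a => rfl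
    have key : ∀ τ : Equiv.Perm (Fin k),
        (Q fun a => v (τ a)) ↔ (Q fun a => (((σ * τ) a : Fin k) : ℕ)) := by
      intro τ
      apply hQ
      intro a b
      rw [hlt]
      simp only [Equiv.Perm.mul_apply, hσ, ← Fin.lt_def]
    calc (Finset.univ.filter fun τ : Equiv.Perm (Fin k) => Q fun a => (π (pos (τ a)) : ℕ)).card
        = (Finset.univ.filter fun τ : Equiv.Perm (Fin k) =>
            Q fun a => (((σ * τ) a : Fin k) : ℕ)).card := by
          apply Finset.card_nbij id
          · intro τ hτ
            simp only [Finset.mem_coe, Finset.mem_filter, Finset.mem_univ, true_and] at hτ ⊢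
            exact (key τ).mp hτ
          · intro τ₁ h₁ τ₂ h₂ h; exact h
          · intro τ hτ
            simp only [Finset.coe_filter, Set.mem_setOf_eq, Finset.mem_univ, true_and,
              Set.mem_image] at hτ ⊢
            exact ⟨τ, (key τ).mpr hτ, rfl⟩
      _ = c := by
          rw [hc]
          apply Finset.card_nbij (fun τ => σ * τ)
          · intro τ hτ
            simp only [Finset.mem_coe, Finset.mem_filter, Finset.mem_univ, true_and] at hτ ⊢
            exact hτ
          · intro τ₁ _ τ₂ _ h
            exact mul_left_cancel h
          · intro τ hτ
            simp only [Finset.coe_filter, Set.mem_setOf_eq, Finset.mem_univ, true_and,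
              Set.mem_image] at hτ ⊢
            refine ⟨σ⁻¹ * τ, ?_, by group⟩
            simpa using hτ
  -- Step B: for every τ, the number of π with Q (π ∘ pos ∘ τ) equals M.
  set M := (Finset.univ.filter fun π : Equiv.Perm (Fin n) => Q fun a => (π (pos a) : ℕ)).card
    with hM
  have stepB : ∀ τ : Equiv.Perm (Fin k),
      (Finset.univ.filter fun π : Equiv.Perm (Fin n) =>
        Q fun a => (π (pos (τ a)) : ℕ)).card = M := by
    intro τ
    set ι : Fin k ↪ Fin n := ⟨pos, hpos⟩ with hι
    set ρ : Equiv.Perm (Fin n) := τ.viaEmbedding ι with hρ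
    have hρpos : ∀ a, ρ (pos a) = pos (τ a) := fun a => τ.viaEmbedding_apply ι a
    rw [hM]
    apply Finset.card_nbij (fun π => π * ρ)
    · intro π hπ
      simp only [Finset.mem_coe, Finset.mem_filter, Finset.mem_univ, true_and] at hπ ⊢
      have : ∀ a, ((π * ρ) (pos a) : ℕ) = (π (pos (τ a)) : ℕ) := by
        intro a; rw [Equiv.Perm.mul_apply, hρpos]
      simpa only [this] using hπ
    · intro π₁ _ π₂ _ h
      exact mul_right_cancel h
    · intro π hπ
      simp only [Finset.coe_filter, Set.mem_setOf_eq, Finset.mem_univ, true_and,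
        Set.mem_image] at hπ ⊢
      refine ⟨π * ρ⁻¹, ?_, by group⟩
      have : ∀ a, ((π * ρ⁻¹ * ρ) (pos a) : ℕ) = (π (pos a) : ℕ) := by
        intro a; rw [inv_mul_cancel_right]
      simp only [Equiv.Perm.mul_apply] at this ⊢
      have h2 : ∀ a, (π (ρ⁻¹ (pos (τ a))) : ℕ) = (π (pos a) : ℕ) := by
        intro a
        rw [← hρpos, Equiv.Perm.inv_def, Equiv.symm_apply_apply]
      simpa only [h2] using hπ
  -- Double counting
  have := Finset.sum_comm (s := (Finset.univ : Finset (Equiv.Perm (Fin n))))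
    (t := (Finset.univ : Finset (Equiv.Perm (Fin k))))
    (f := fun π τ => if Q fun a => (π (pos (τ a)) : ℕ) then (1 : ℕ) else 0)
  have lhs_eq : (∑ π : Equiv.Perm (Fin n), ∑ τ : Equiv.Perm (Fin k),
      if Q fun a => (π (pos (τ a)) : ℕ) then (1 : ℕ) else 0) = Nat.factorial n * c := by
    have : ∀ π : Equiv.Perm (Fin n), (∑ τ : Equiv.Perm (Fin k),
        if Q fun a => (π (pos (τ a)) : ℕ) then (1 : ℕ) else 0) = c := by
      intro π
      rw [← stepA π, Finset.card_filter]
    rw [Finset.sum_congr rfl fun π _ => this π, Finset.sum_const, Finset.card_univ,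
      Fintype.card_perm, Fintype.card_fin, smul_eq_mul]
  have rhs_eq : (∑ τ : Equiv.Perm (Fin k), ∑ π : Equiv.Perm (Fin n),
      if Q fun a => (π (pos (τ a)) : ℕ) then (1 : ℕ) else 0) = Nat.factorial k * M := by
    have : ∀ τ : Equiv.Perm (Fin k), (∑ π : Equiv.Perm (Fin n),
        if Q fun a => (π (pos (τ a)) : ℕ) then (1 : ℕ) else 0) = M := by
      intro τ
      rw [← stepB τ, Finset.card_filter]
    rw [Finset.sum_congr rfl fun τ _ => this τ, Finset.sum_const, Finset.card_univ,
      Fintype.card_perm, Fintype.card_fin, smul_eq_mul]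
  rw [mul_comm M (Nat.factorial k), ← rhs_eq, ← this, lhs_eq]

lemma permVal_fold {n : ℕ} (π : Equiv.Perm (Fin n)) :
    ∀ (j : ℕ) (hj : j < n), (π ⟨j, hj⟩ : ℕ) = permVal n π j := by
  intro j hj
  unfold permVal
  rw [dif_pos hj]

lemma count_single {n i : ℕ} (h1 : 1 ≤ i) (h2 : i + 1 < n) :
    (Finset.univ.filter fun π : Equiv.Perm (Fin n) =>
      permVal n π (i - 1) < permVal n π i ∧ permVal n π (i + 1) < permVal n π i).card * 6
      = Nat.factorial n * 2 := by
  classical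
  have hA : i - 1 + 1 = i := by omega
  have hB : i - 1 + 2 = i + 1 := by omega
  have hbound : ∀ a : Fin 3, i - 1 + (a : ℕ) < n := fun a => by omega
  set pos : Fin 3 → Fin n := fun a => ⟨i - 1 + (a : ℕ), hbound a⟩ with hposdef
  have hposinj : Function.Injective pos := by
    intro a b hab
    rw [hposdef] at hab
    have h := congrArg Fin.val hab
    simp only [Fin.val_mk] at h
    exact Fin.ext (by omega)
  have key := core_count pos hposinj
    (fun f => f 0 < f 1 ∧ f 2 < f 1)
    (fun f g h => and_congr (h 0 1) (h 2 1))
  have c3 : (Finset.univ.filter fun τ : Equiv.Perm (Fin 3) =>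
      (fun f : Fin 3 → ℕ => f 0 < f 1 ∧ f 2 < f 1) fun a => ((τ a : ℕ))).card = 2 := by
    decide
  have hfe : (Finset.univ.filter fun π : Equiv.Perm (Fin n) =>
      (fun f : Fin 3 → ℕ => f 0 < f 1 ∧ f 2 < f 1) fun a => ((π (pos a)) : ℕ))
      = (Finset.univ.filter fun π : Equiv.Perm (Fin n) =>
        permVal n π (i - 1) < permVal n π i ∧ permVal n π (i + 1) < permVal n π i) := by
    apply Finset.filter_congr
    intro π _
    rw [hposdef]
    have e0 : ((0 : Fin 3) : ℕ) = 0 := rfl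
    have e1 : ((1 : Fin 3) : ℕ) = 1 := rfl
    have e2 : ((2 : Fin 3) : ℕ) = 2 := rfl
    simp only [permVal_fold, e0, e1, e2, Nat.add_zero]
    rw [hA, hB]
  rw [c3, show Nat.factorial 3 = 6 from rfl, hfe] at key
  exact key

lemma count_adj {n i : ℕ} :
    (Finset.univ.filter fun π : Equiv.Perm (Fin n) =>
      (permVal n π (i - 1) < permVal n π i ∧ permVal n π (i + 1) < permVal n π i) ∧
      (permVal n π (i + 1 - 1) < permVal n π (i + 1) ∧
        permVal n π (i + 1 + 1) < permVal n π (i + 1))).card = 0 := by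
  rw [Finset.card_eq_zero, Finset.filter_eq_empty_iff]
  rintro π - ⟨⟨-, h2⟩, ⟨h3, -⟩⟩
  rw [Nat.add_sub_cancel] at h3
  exact lt_asymm h2 h3

lemma count_pair2 {n i : ℕ} (h1 : 1 ≤ i) (h2 : i + 3 < n) :
    (Finset.univ.filter fun π : Equiv.Perm (Fin n) =>
      (permVal n π (i - 1) < permVal n π i ∧ permVal n π (i + 1) < permVal n π i) ∧
      (permVal n π (i + 2 - 1) < permVal n π (i + 2) ∧
        permVal n π (i + 2 + 1) < permVal n π (i + 2))).card * 120
      = Nat.factorial n * 16 := by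
  classical
  have hA : i - 1 + 1 = i := by omega
  have hB : i - 1 + 2 = i + 1 := by omega
  have hC : i - 1 + 3 = i + 2 := by omega
  have hD : i - 1 + 4 = i + 3 := by omega
  have hE : i + 2 - 1 = i + 1 := by omega
  have hF : i + 2 + 1 = i + 3 := by omega
  have hbound : ∀ a : Fin 5, i - 1 + (a : ℕ) < n := fun a => by omega
  set pos : Fin 5 → Fin n := fun a => ⟨i - 1 + (a : ℕ), hbound a⟩ with hposdef
  have hposinj : Function.Injective pos := by
    intro a b hab
    rw [hposdef] at hab
    have h := congrArg Fin.val hab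
    simp only [Fin.val_mk] at h
    exact Fin.ext (by omega)
  have key := core_count pos hposinj
    (fun f => (f 0 < f 1 ∧ f 2 < f 1) ∧ (f 2 < f 3 ∧ f 4 < f 3))
    (fun f g h => and_congr (and_congr (h 0 1) (h 2 1)) (and_congr (h 2 3) (h 4 3)))
  have c5 : (Finset.univ.filter fun τ : Equiv.Perm (Fin 5) =>
      (fun f : Fin 5 → ℕ => (f 0 < f 1 ∧ f 2 < f 1) ∧ (f 2 < f 3 ∧ f 4 < f 3))
        fun a => ((τ a : ℕ))).card = 16 := by
    decide
  have hfe : (Finset.univ.filter fun π : Equiv.Perm (Fin n) =>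
      (fun f : Fin 5 → ℕ => (f 0 < f 1 ∧ f 2 < f 1) ∧ (f 2 < f 3 ∧ f 4 < f 3))
        fun a => ((π (pos a)) : ℕ))
      = (Finset.univ.filter fun π : Equiv.Perm (Fin n) =>
        (permVal n π (i - 1) < permVal n π i ∧ permVal n π (i + 1) < permVal n π i) ∧
        (permVal n π (i + 2 - 1) < permVal n π (i + 2) ∧
          permVal n π (i + 2 + 1) < permVal n π (i + 2))) := by
    apply Finset.filter_congr
    intro π _
    rw [hposdef]
    have e0 : ((0 : Fin 5) : ℕ) = 0 := rfl
    have e1 : ((1 : Fin 5) : ℕ) = 1 := rfl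
    have e2 : ((2 : Fin 5) : ℕ) = 2 := rfl
    have e3 : ((3 : Fin 5) : ℕ) = 3 := rfl
    have e4 : ((4 : Fin 5) : ℕ) = 4 := rfl
    simp only [permVal_fold, e0, e1, e2, e3, e4, Nat.add_zero]
    rw [hA, hB, hC, hD, hE, hF]
  rw [c5, show Nat.factorial 5 = 120 from rfl, hfe] at key
  exact key

set_option maxHeartbeats 4000000 in
set_option maxRecDepth 10000 in
lemma count_pair3 {n i j : ℕ} (h1 : 1 ≤ i) (h3 : i + 3 ≤ j) (h4 : j + 1 < n) :
    (Finset.univ.filter fun π : Equiv.Perm (Fin n) =>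
      (permVal n π (i - 1) < permVal n π i ∧ permVal n π (i + 1) < permVal n π i) ∧
      (permVal n π (j - 1) < permVal n π j ∧
        permVal n π (j + 1) < permVal n π j)).card * 720
      = Nat.factorial n * 80 := by
  classical
  have hA : i - 1 + 1 = i := by omega
  have hB : i - 1 + 2 = i + 1 := by omega
  have hC : j - 1 + 1 = j := by omega
  have hD : j - 1 + 2 = j + 1 := by omega
  have hbound : ∀ a : Fin 6,
      (if (a : ℕ) < 3 then i - 1 + (a : ℕ) else j - 1 + ((a : ℕ) - 3)) < n := fun a => by
    split_ifs <;> omega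
  set pos : Fin 6 → Fin n := fun a =>
    ⟨if (a : ℕ) < 3 then i - 1 + (a : ℕ) else j - 1 + ((a : ℕ) - 3), hbound a⟩ with hposdef
  have hposinj : Function.Injective pos := by
    intro a b hab
    rw [hposdef] at hab
    have h := congrArg Fin.val hab
    simp only [Fin.val_mk] at h
    apply Fin.ext
    have ha := a.isLt
    have hb := b.isLt
    split_ifs at h <;> omega
  have key := core_count pos hposinj
    (fun f => (f 0 < f 1 ∧ f 2 < f 1) ∧ (f 3 < f 4 ∧ f 5 < f 4))
    (fun f g h => and_congr (and_congr (h 0 1) (h 2 1)) (and_congr (h 3 4) (h 5 4)))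
  have c6 : (Finset.univ.filter fun τ : Equiv.Perm (Fin 6) =>
      (fun f : Fin 6 → ℕ => (f 0 < f 1 ∧ f 2 < f 1) ∧ (f 3 < f 4 ∧ f 5 < f 4))
        fun a => ((τ a : ℕ))).card = 80 := by
    decide
  have hfe : (Finset.univ.filter fun π : Equiv.Perm (Fin n) =>
      (fun f : Fin 6 → ℕ => (f 0 < f 1 ∧ f 2 < f 1) ∧ (f 3 < f 4 ∧ f 5 < f 4))
        fun a => ((π (pos a)) : ℕ))
      = (Finset.univ.filter fun π : Equiv.Perm (Fin n) =>
        (permVal n π (i - 1) < permVal n π i ∧ permVal n π (i + 1) < permVal n π i) ∧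
        (permVal n π (j - 1) < permVal n π j ∧
          permVal n π (j + 1) < permVal n π j)) := by
    apply Finset.filter_congr
    intro π _
    rw [hposdef]
    have e0 : ((0 : Fin 6) : ℕ) = 0 := rfl
    have e1 : ((1 : Fin 6) : ℕ) = 1 := rfl
    have e2 : ((2 : Fin 6) : ℕ) = 2 := rfl
    have e3 : ((3 : Fin 6) : ℕ) = 3 := rfl
    have e4 : ((4 : Fin 6) : ℕ) = 4 := rfl
    have e5 : ((5 : Fin 6) : ℕ) = 5 := rfl
    simp only [permVal_fold, e0, e1, e2, e3, e4, e5]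
    norm_num
    rw [hA, hB, hC, hD]
  rw [c6, show Nat.factorial 6 = 720 from rfl, hfe] at key
  exact key

lemma ite_one_mul_ite_one {p q : Prop} [Decidable p] [Decidable q] :
    (if p then (1 : ℝ) else 0) * (if q then (1 : ℝ) else 0) = if p ∧ q then (1 : ℝ) else 0 := by
  by_cases hp : p <;> by_cases hq : q <;> simp [hp, hq]


/-- For `n ≥ 4`, the variance of the number of peaks of a uniformly random permutation of
`S_n` is `2(n+1)/45`, where `Var(p) = E[p²] - E[p]²`. -/
theorem variance_peaks (n : ℕ) (hn : 4 ≤ n) :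
    (∑ π : Equiv.Perm (Fin n), (peaks n π : ℝ) ^ 2) / (Nat.factorial n : ℝ)
        - ((∑ π : Equiv.Perm (Fin n), (peaks n π : ℝ)) / (Nat.factorial n : ℝ)) ^ 2
      = 2 * ((n : ℝ) + 1) / 45 := by
  classical
  set F : ℝ := (Nat.factorial n : ℝ) with hFdef
  have hF : F ≠ 0 := Nat.cast_ne_zero.mpr (Nat.factorial_ne_zero n)
  set I := Finset.Ico 1 (n - 1) with hIdef
  set P : ℕ → Equiv.Perm (Fin n) → Prop := fun i π =>
    permVal n π (i - 1) < permVal n π i ∧ permVal n π (i + 1) < permVal n π i with hPdef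
  have hpeak : ∀ π : Equiv.Perm (Fin n),
      (peaks n π : ℝ) = ∑ i ∈ I, (if P i π then (1 : ℝ) else 0) := by
    intro π
    rw [peaks, Finset.card_filter]
    push_cast
    rfl
  set N : ℕ → ℕ := fun i =>
    (Finset.univ.filter fun π : Equiv.Perm (Fin n) => P i π).card with hNdef
  set M : ℕ → ℕ → ℕ := fun i j =>
    (Finset.univ.filter fun π : Equiv.Perm (Fin n) => P i π ∧ P j π).card with hMdef
  have hN : ∀ i : ℕ, 1 ≤ i → i + 1 < n → (N i : ℝ) = F / 3 := by
    intro i hi1 hi2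
    have key : N i * 6 = Nat.factorial n * 2 := count_single hi1 hi2
    have := congrArg (fun k : ℕ => (k : ℝ)) key
    push_cast at this
    rw [hFdef]
    linarith
  have hMsymm : ∀ i j, M i j = M j i := by
    intro i j
    show (Finset.univ.filter fun π : Equiv.Perm (Fin n) => P i π ∧ P j π).card
      = (Finset.univ.filter fun π : Equiv.Perm (Fin n) => P j π ∧ P i π).card
    apply congrArg
    apply Finset.filter_congr
    intro π _
    rw [and_comm]
  have hMdiag : ∀ i, M i i = N i := by
    intro i
    show (Finset.univ.filter fun π : Equiv.Perm (Fin n) => P i π ∧ P i π).card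
      = (Finset.univ.filter fun π : Equiv.Perm (Fin n) => P i π).card
    apply congrArg
    apply Finset.filter_congr
    intro π _
    rw [and_self]
  have hMadj : ∀ i, M i (i + 1) = 0 := fun i => count_adj
  have hM2 : ∀ i : ℕ, 1 ≤ i → i + 3 < n → (M i (i + 2) : ℝ) = 2 * F / 15 := by
    intro i hi1 hi2
    have key : M i (i + 2) * 120 = Nat.factorial n * 16 := count_pair2 hi1 hi2
    have := congrArg (fun k : ℕ => (k : ℝ)) key
    push_cast at this
    rw [hFdef]
    linarith
  have hM3 : ∀ i j : ℕ, 1 ≤ i → i + 3 ≤ j → j + 1 < n → (M i j : ℝ) = F / 9 := by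
    intro i j hi1 h3 h4
    have key : M i j * 720 = Nat.factorial n * 80 := count_pair3 hi1 h3 h4
    have := congrArg (fun k : ℕ => (k : ℝ)) key
    push_cast at this
    rw [hFdef]
    linarith
  have hMval : ∀ i ∈ I, ∀ j ∈ I, (M i j : ℝ)
      = F / 9 + (if i = j then 2 * F / 9 else 0) + (if j = i + 1 then -(F / 9) else 0)
        + (if i = j + 1 then -(F / 9) else 0) + (if j = i + 2 then F / 45 else 0)
        + (if i = j + 2 then F / 45 else 0) := by
    intro i hi j hj
    rw [hIdef, Finset.mem_Ico] at hi hj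
    obtain ⟨hi1, hi2⟩ := hi
    obtain ⟨hj1, hj2⟩ := hj
    by_cases e0 : i = j
    · subst e0
      rw [if_pos rfl, if_neg (show ¬i = i + 1 by omega), if_neg (show ¬i = i + 2 by omega),
        hMdiag, hN i hi1 (by omega)]
      ring
    by_cases e1 : j = i + 1
    · subst e1
      rw [if_neg e0, if_pos rfl, if_neg (by omega), if_neg (by omega), if_neg (by omega),
        hMadj]
      push_cast
      ring
    by_cases e2 : i = j + 1
    · subst e2
      rw [if_neg e0, if_neg e1, if_pos rfl, if_neg (by omega), if_neg (by omega),
        hMsymm, hMadj]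
      push_cast
      ring
    by_cases e3 : j = i + 2
    · subst e3
      rw [if_neg e0, if_neg e1, if_neg e2, if_pos rfl, if_neg (by omega),
        hM2 i hi1 (by omega)]
      ring
    by_cases e4 : i = j + 2
    · subst e4
      rw [if_neg e0, if_neg e1, if_neg e2, if_neg e3, if_pos rfl, hMsymm,
        hM2 j hj1 (by omega)]
      ring
    · rw [if_neg e0, if_neg e1, if_neg e2, if_neg e3, if_neg e4]
      rcases (by omega : i + 3 ≤ j ∨ j + 3 ≤ i) with h | h
      · rw [hM3 i j hi1 h (by omega)]
        ring
      · rw [hMsymm, hM3 j i hj1 h (by omega)]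
        ring
  -- cardinalities
  have hcardI : ((I.card : ℕ) : ℝ) = (n : ℝ) - 2 := by
    rw [hIdef, Nat.card_Ico, show n - 1 - 1 = n - 2 by omega, Nat.cast_sub (by omega)]
    norm_num
  have hf1 : (I.filter fun i => i + 1 ∈ I) = Finset.Ico 1 (n - 2) := by
    rw [hIdef]
    ext x
    simp only [Finset.mem_filter, Finset.mem_Ico]
    omega
  have hf2 : (I.filter fun i => i + 2 ∈ I) = Finset.Ico 1 (n - 3) := by
    rw [hIdef]
    ext x
    simp only [Finset.mem_filter, Finset.mem_Ico]
    omega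
  have hcard1 : ((Finset.Ico 1 (n - 2)).card : ℝ) = (n : ℝ) - 3 := by
    rw [Nat.card_Ico, show n - 2 - 1 = n - 3 by omega, Nat.cast_sub (by omega)]
    norm_num
  have hcard2 : ((Finset.Ico 1 (n - 3)).card : ℝ) = (n : ℝ) - 4 := by
    rw [Nat.card_Ico, show n - 3 - 1 = n - 4 by omega, Nat.cast_sub hn]
    norm_num
  -- first moment
  have hS1 : (∑ π : Equiv.Perm (Fin n), (peaks n π : ℝ)) = ((n : ℝ) - 2) * (F / 3) := by
    rw [Finset.sum_congr rfl fun π _ => hpeak π, Finset.sum_comm]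
    have h1 : ∀ i ∈ I, (∑ π : Equiv.Perm (Fin n), if P i π then (1 : ℝ) else 0) = F / 3 := by
      intro i hi
      rw [Finset.sum_boole]
      rw [hIdef, Finset.mem_Ico] at hi
      exact hN i hi.1 (by omega)
    rw [Finset.sum_congr rfl h1, Finset.sum_const, nsmul_eq_mul, hcardI]
  -- second moment
  have hS2 : (∑ π : Equiv.Perm (Fin n), (peaks n π : ℝ) ^ 2)
      = ∑ i ∈ I, ∑ j ∈ I, (M i j : ℝ) := by
    have h1 : ∀ π : Equiv.Perm (Fin n), (peaks n π : ℝ) ^ 2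
        = ∑ i ∈ I, ∑ j ∈ I, (if P i π ∧ P j π then (1 : ℝ) else 0) := by
      intro π
      rw [sq, hpeak π, Finset.sum_mul_sum]
      refine Finset.sum_congr rfl fun i _ => Finset.sum_congr rfl fun j _ => ?_
      rw [ite_one_mul_ite_one]
    rw [Finset.sum_congr rfl fun π _ => h1 π, Finset.sum_comm]
    refine Finset.sum_congr rfl fun i _ => ?_
    rw [Finset.sum_comm]
    refine Finset.sum_congr rfl fun j _ => ?_
    rw [Finset.sum_boole]
  -- evaluate the double sum
  have hT0 : (∑ _i ∈ I, ∑ _j ∈ I, (F / 9 : ℝ)) = ((n : ℝ) - 2) * (((n : ℝ) - 2) * (F / 9)) := by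
    simp only [Finset.sum_const, nsmul_eq_mul]
    rw [hcardI]
  have hT1 : (∑ i ∈ I, ∑ j ∈ I, if i = j then (2 * F / 9 : ℝ) else 0)
      = ((n : ℝ) - 2) * (2 * F / 9) := by
    have h1 : ∀ i ∈ I, (∑ j ∈ I, if i = j then (2 * F / 9 : ℝ) else 0) = 2 * F / 9 := by
      intro i hi
      rw [Finset.sum_ite_eq, if_pos hi]
    rw [Finset.sum_congr rfl h1, Finset.sum_const, nsmul_eq_mul, hcardI]
  have hT2 : (∑ i ∈ I, ∑ j ∈ I, if j = i + 1 then (-(F / 9) : ℝ) else 0)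
      = ((n : ℝ) - 3) * (-(F / 9)) := by
    have h1 : ∀ i ∈ I, (∑ j ∈ I, if j = i + 1 then (-(F / 9) : ℝ) else 0)
        = if i + 1 ∈ I then -(F / 9) else 0 := by
      intro i _
      rw [Finset.sum_ite_eq']
    rw [Finset.sum_congr rfl h1, ← Finset.sum_filter, hf1, Finset.sum_const, nsmul_eq_mul,
      hcard1]
  have hT3 : (∑ i ∈ I, ∑ j ∈ I, if i = j + 1 then (-(F / 9) : ℝ) else 0)
      = ((n : ℝ) - 3) * (-(F / 9)) := by
    rw [Finset.sum_comm]
    have h1 : ∀ j ∈ I, (∑ i ∈ I, if i = j + 1 then (-(F / 9) : ℝ) else 0)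
        = if j + 1 ∈ I then -(F / 9) else 0 := by
      intro j _
      rw [Finset.sum_ite_eq']
    rw [Finset.sum_congr rfl h1, ← Finset.sum_filter, hf1, Finset.sum_const, nsmul_eq_mul,
      hcard1]
  have hT4 : (∑ i ∈ I, ∑ j ∈ I, if j = i + 2 then (F / 45 : ℝ) else 0)
      = ((n : ℝ) - 4) * (F / 45) := by
    have h1 : ∀ i ∈ I, (∑ j ∈ I, if j = i + 2 then (F / 45 : ℝ) else 0)
        = if i + 2 ∈ I then F / 45 else 0 := by
      intro i _
      rw [Finset.sum_ite_eq']
    rw [Finset.sum_congr rfl h1, ← Finset.sum_filter, hf2, Finset.sum_const, nsmul_eq_mul,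
      hcard2]
  have hT5 : (∑ i ∈ I, ∑ j ∈ I, if i = j + 2 then (F / 45 : ℝ) else 0)
      = ((n : ℝ) - 4) * (F / 45) := by
    rw [Finset.sum_comm]
    have h1 : ∀ j ∈ I, (∑ i ∈ I, if i = j + 2 then (F / 45 : ℝ) else 0)
        = if j + 2 ∈ I then F / 45 else 0 := by
      intro j _
      rw [Finset.sum_ite_eq']
    rw [Finset.sum_congr rfl h1, ← Finset.sum_filter, hf2, Finset.sum_const, nsmul_eq_mul,
      hcard2]
  have hS2' : (∑ i ∈ I, ∑ j ∈ I, (M i j : ℝ))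
      = ((n : ℝ) - 2) * (((n : ℝ) - 2) * (F / 9)) + ((n : ℝ) - 2) * (2 * F / 9)
        + ((n : ℝ) - 3) * (-(F / 9)) + ((n : ℝ) - 3) * (-(F / 9))
        + ((n : ℝ) - 4) * (F / 45) + ((n : ℝ) - 4) * (F / 45) := by
    rw [Finset.sum_congr rfl fun i hi => Finset.sum_congr rfl fun j hj => hMval i hi j hj]
    simp only [Finset.sum_add_distrib]
    rw [hT0, hT1, hT2, hT3, hT4, hT5]
  rw [hS1, hS2, hS2']
  field_simp
  ring
end

section
/- For every integer n ≥ 0 and real t ∈ (0,1), the following two-sided bound holds: t · n!/(log(1/t))^{n+1} ≤ ∑_{a≥1} a^n t^a ≤ (1/t) · n!/(log(1/t))^{n+1}. -/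
open MeasureTheory Set Finset

/-- For `0 < t < 1` and `n ≥ 0`:
`t n!/(log(1/t))^{n+1} ≤ ∑_{a ≥ 1} a^n t^a ≤ (1/t) n!/(log(1/t))^{n+1}`. -/
theorem power_sum_log_bounds (n : ℕ) (t : ℝ) (ht : t ∈ Set.Ioo (0 : ℝ) 1) :
    t * (Nat.factorial n : ℝ) / (Real.log (1 / t)) ^ (n + 1)
        ≤ ∑' a : ℕ, ((a : ℝ) + 1) ^ n * t ^ (a + 1)
      ∧ ∑' a : ℕ, ((a : ℝ) + 1) ^ n * t ^ (a + 1)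
        ≤ (1 / t) * (Nat.factorial n : ℝ) / (Real.log (1 / t)) ^ (n + 1) := by
  obtain ⟨ht0, ht1⟩ := ht
  set c : ℝ := Real.log (1 / t) with hcdef
  have hc0 : 0 < c := Real.log_pos (by rw [lt_div_iff₀ ht0]; linarith)
  have hlogt : Real.log t = -c := by
    rw [hcdef, Real.log_div one_ne_zero ht0.ne', Real.log_one, zero_sub, neg_neg]
  have hexp : ∀ k : ℕ, t ^ k = Real.exp (-(c * k)) := by
    intro k
    rw [← Real.exp_log ht0, ← Real.exp_nat_mul, hlogt]
    ring_nf
  set f : ℝ → ℝ := fun x => x ^ n * Real.exp (-(c * x)) with hf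
  have hfcont : Continuous f := by
    apply (continuous_pow n).mul
    exact Real.continuous_exp.comp (continuous_const.mul continuous_id).neg
  have hfnn : ∀ x : ℝ, 0 ≤ x → 0 ≤ f x := fun x hx => by positivity
  -- integrability of f on Ioi 0
  have hint : IntegrableOn f (Ioi 0) := by
    have hg : IntegrableOn (fun x : ℝ => Real.exp (-x) * x ^ ((n : ℝ) + 1 - 1)) (Ioi 0) :=
      Real.GammaIntegral_convergent (by positivity)
    have hg2 : IntegrableOn (fun x : ℝ => Real.exp (-(c * x)) * (c * x) ^ ((n : ℝ) + 1 - 1))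
        (Ioi 0) := by
      have := (MeasureTheory.integrableOn_Ioi_comp_mul_left_iff
        (fun x : ℝ => Real.exp (-x) * x ^ ((n : ℝ) + 1 - 1)) 0 hc0).2
      simpa using (this (by simpa using hg))
    have hg3 : IntegrableOn (fun x : ℝ => c ^ (-(n:ℝ)) * (Real.exp (-(c * x)) * (c * x) ^ ((n : ℝ) + 1 - 1))) (Ioi 0) :=
      hg2.smul (c ^ (-(n:ℝ)))
    apply hg3.congr_fun _ measurableSet_Ioi
    intro x hx
    have hx0 : (0:ℝ) < x := hx
    show c ^ (-(n:ℝ)) * (Real.exp (-(c * x)) * (c * x) ^ ((n:ℝ) + 1 - 1)) = f x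
    rw [add_sub_cancel_right, Real.mul_rpow hc0.le hx0.le, Real.rpow_natCast x n, hf]
    rw [show c ^ (-(n:ℝ)) * (Real.exp (-(c * x)) * (c ^ (n:ℝ) * x ^ n))
        = (c ^ (-(n:ℝ)) * c ^ (n:ℝ)) * (x ^ n * Real.exp (-(c * x))) by ring,
      ← Real.rpow_add hc0, neg_add_cancel, Real.rpow_zero, one_mul]
  -- value of the integral
  have hI : ∫ x in Ioi (0:ℝ), f x = (Nat.factorial n : ℝ) / c ^ (n + 1) := by
    have h := Real.integral_rpow_mul_exp_neg_mul_Ioi (a := (n : ℝ) + 1) (r := c)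
      (by positivity) hc0
    rw [show ((n:ℝ) + 1 - 1) = (n:ℝ) by ring] at h
    have heq : ∫ x in Ioi (0:ℝ), f x
        = ∫ x : ℝ in Ioi 0, x ^ ((n:ℝ)) * Real.exp (-(c * x)) := by
      refine setIntegral_congr_fun measurableSet_Ioi fun x hx => ?_
      rw [Real.rpow_natCast]
    rw [heq, h, Real.Gamma_nat_eq_factorial,
      show ((n:ℝ)+1) = ((n+1 : ℕ):ℝ) by push_cast; ring, Real.rpow_natCast,
      one_div, inv_pow]
    field_simp
  -- termwise bounds
  have key : ∀ a : ℕ,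
      (a:ℝ)^n * t^(a+1) ≤ (∫ x in (a:ℝ)..((a:ℝ)+1), f x)
      ∧ (∫ x in (a:ℝ)..((a:ℝ)+1), f x) ≤ ((a:ℝ)+1)^n * t^a := by
    intro a
    have hii : IntervalIntegrable f volume (a:ℝ) ((a:ℝ)+1) :=
      hfcont.intervalIntegrable _ _
    have hle : (a:ℝ) ≤ (a:ℝ)+1 := by linarith
    constructor
    · have h1 : ∫ _x in (a:ℝ)..((a:ℝ)+1), ((a:ℝ)^n * t^(a+1)) = (a:ℝ)^n * t^(a+1) := by
        simp
      rw [← h1]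
      apply intervalIntegral.integral_mono_on hle intervalIntegrable_const hii
      intro x hx
      rw [hexp (a+1), hf]
      push_cast
      exact mul_le_mul (pow_le_pow_left₀ (Nat.cast_nonneg a) hx.1 n)
        (Real.exp_le_exp.2 (by nlinarith [hx.2])) (Real.exp_pos _).le
        (pow_nonneg (le_trans (Nat.cast_nonneg a) hx.1) n)
    · have h1 : ∫ _x in (a:ℝ)..((a:ℝ)+1), (((a:ℝ)+1)^n * t^a) = ((a:ℝ)+1)^n * t^a := by
        simp
      rw [← h1]
      apply intervalIntegral.integral_mono_on hle hii intervalIntegrable_const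
      intro x hx
      rw [hexp a, hf]
      exact mul_le_mul (pow_le_pow_left₀ (le_trans (Nat.cast_nonneg a) hx.1) hx.2 n)
        (Real.exp_le_exp.2 (by nlinarith [hx.1])) (Real.exp_pos _).le
        (pow_nonneg (by positivity) n)
  -- summability
  have hGsum : Summable (fun a : ℕ => (a:ℝ)^n * t^a) :=
    summable_pow_mul_geometric_of_norm_lt_one n
      (by rw [Real.norm_eq_abs, abs_of_pos ht0]; exact ht1)
  have hSsum : Summable (fun a : ℕ => ((a:ℝ)+1)^n * t^(a+1)) := by
    have h := (summable_nat_add_iff 1).2 hGsum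
    refine h.congr fun a => ?_
    push_cast; ring
  have hBsum : Summable (fun a : ℕ => ((a:ℝ)+1)^n * t^a) := by
    have h := hSsum.mul_left (1/t)
    refine h.congr fun a => ?_
    rw [pow_succ]
    field_simp
  have hSB : (∑' a : ℕ, ((a:ℝ)+1)^n * t^(a+1)) = t * ∑' a : ℕ, ((a:ℝ)+1)^n * t^a := by
    rw [← tsum_mul_left]
    refine tsum_congr fun a => ?_
    rw [pow_succ]; ring
  -- splitting the integral
  have hsplit : ∀ N : ℕ, (∫ x in (0:ℝ)..(N:ℝ), f x)
      = ∑ a ∈ Finset.range N, ∫ x in (a:ℝ)..((a:ℝ)+1), f x := by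
    intro N
    have h := intervalIntegral.sum_integral_adjacent_intervals
      (a := fun k : ℕ => (k:ℝ)) (f := f) (μ := volume) (n := N)
      (fun k _ => hfcont.intervalIntegrable _ _)
    simp only [Nat.cast_zero] at h
    rw [← h]
    exact Finset.sum_congr rfl fun k _ => by push_cast; rfl
  -- lower bound on the sum
  have hIB : (Nat.factorial n : ℝ) / c^(n+1) ≤ ∑' a : ℕ, ((a:ℝ)+1)^n * t^a := by
    rw [← hI]
    have htend := MeasureTheory.intervalIntegral_tendsto_integral_Ioi 0 hint
      tendsto_natCast_atTop_atTop
    refine le_of_tendsto htend (Filter.Eventually.of_forall fun N => ?_)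
    rw [hsplit N]
    calc ∑ a ∈ Finset.range N, ∫ x in (a:ℝ)..((a:ℝ)+1), f x
        ≤ ∑ a ∈ Finset.range N, ((a:ℝ)+1)^n * t^a :=
          Finset.sum_le_sum fun a _ => (key a).2
      _ ≤ ∑' a : ℕ, ((a:ℝ)+1)^n * t^a :=
          Summable.sum_le_tsum _ (fun a _ => by positivity) hBsum
  -- upper bound on the sum
  have hup : ∑' a : ℕ, t * (((a:ℝ)+1)^n * t^(a+1)) ≤ (Nat.factorial n : ℝ) / c^(n+1) := by
    rw [← hI]
    apply Real.tsum_le_of_sum_range_le (fun a => by positivity)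
    intro N
    have h0 : ∑ a ∈ Finset.range N, t * (((a:ℝ)+1)^n * t^(a+1))
        ≤ ∑ a ∈ Finset.range (N+1), (a:ℝ)^n * t^(a+1) := by
      rw [Finset.sum_range_succ']
      have hge : (0:ℝ) ≤ ((0:ℕ):ℝ)^n * t^(0+1) := by positivity
      refine le_trans (le_of_eq ?_) (le_add_of_nonneg_right hge)
      refine Finset.sum_congr rfl fun a _ => ?_
      push_cast; ring
    calc ∑ a ∈ Finset.range N, t * (((a:ℝ)+1)^n * t^(a+1))
        ≤ ∑ a ∈ Finset.range (N+1), (a:ℝ)^n * t^(a+1) := h0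
      _ ≤ ∑ a ∈ Finset.range (N+1), ∫ x in (a:ℝ)..((a:ℝ)+1), f x :=
          Finset.sum_le_sum fun a _ => (key a).1
      _ = ∫ x in (0:ℝ)..((N+1:ℕ):ℝ), f x := (hsplit (N+1)).symm
      _ ≤ ∫ x in Ioi (0:ℝ), f x := by
          rw [intervalIntegral.integral_of_le (by positivity)]
          apply setIntegral_mono_set hint
          · exact (ae_restrict_iff' measurableSet_Ioi).2
              (Filter.Eventually.of_forall fun x hx => hfnn x hx.le)
          · exact HasSubset.Subset.eventuallyLE Ioc_subset_Ioi_self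
  constructor
  · rw [hSB]
    calc t * (Nat.factorial n : ℝ) / c^(n+1)
        = t * ((Nat.factorial n : ℝ)/c^(n+1)) := by ring
      _ ≤ t * ∑' a : ℕ, ((a:ℝ)+1)^n * t^a := mul_le_mul_of_nonneg_left hIB ht0.le
  · have h2 : t * ∑' a : ℕ, ((a:ℝ)+1)^n * t^(a+1) ≤ (Nat.factorial n : ℝ)/c^(n+1) := by
      rw [← tsum_mul_left]; exact hup
    rw [show (1/t) * (Nat.factorial n : ℝ)/c^(n+1)
        = ((Nat.factorial n : ℝ)/c^(n+1))/t by ring, le_div_iff₀ ht0, mul_comm]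
    exact h2
end

section
/- Define f_{a,i} = (1/(2i)) ∑_{d | i, d odd} μ(d) (2a)^{i/d} and g_{a,i} = 2i · f_{a,i} / (2a)^i, where μ is the Möbius function. Then for all integers a ≥ 1 and i ≥ 1, exp(-4·(2a)^{-2i/3}) ≤ g_{a,i} ≤ exp(4·(2a)^{-2i/3}). -/
/-- `f_{a,i} = (1/(2i)) ∑_{d ∣ i, d odd} μ(d) (2a)^{i/d}`. -/
noncomputable def fai (a i : ℕ) : ℝ :=
  (1 / (2 * (i : ℝ))) * ∑ d ∈ (Nat.divisors i).filter (fun d => Odd d),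
    ((ArithmeticFunction.moebius d : ℤ) : ℝ) * (2 * (a : ℝ)) ^ (i / d)

/-- `g_{a,i} = 2i f_{a,i} / (2a)^i`. -/
noncomputable def gai (a i : ℕ) : ℝ :=
  2 * (i : ℝ) * fai a i / (2 * (a : ℝ)) ^ i

private lemma geom_sum_le_two_mul (b : ℝ) (hb : 2 ≤ b) : ∀ n, ∑ k ∈ Finset.range (n+1), b ^ k ≤ 2 * b ^ n := by
  intro n
  induction n with
  | zero => norm_num
  | succ n ih =>
    rw [Finset.sum_range_succ]
    nlinarith [pow_nonneg (by linarith : (0:ℝ) ≤ b) n, pow_succ b n]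

/-- For all `a ≥ 1` and `i ≥ 1`:
`exp(-4 (2a)^{-2i/3}) ≤ g_{a,i} ≤ exp(4 (2a)^{-2i/3})`. -/
theorem gai_exp_bounds (a i : ℕ) (ha : 1 ≤ a) (hi : 1 ≤ i) :
    Real.exp (-(4 * (2 * (a : ℝ)) ^ (-(2 * (i : ℝ) / 3)))) ≤ gai a i
      ∧ gai a i ≤ Real.exp (4 * (2 * (a : ℝ)) ^ (-(2 * (i : ℝ) / 3))) := by
  have hb2 : (2:ℝ) ≤ 2 * (a:ℝ) := by
    have : (1:ℝ) ≤ a := by exact_mod_cast ha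
    linarith
  set b : ℝ := 2 * (a:ℝ) with hbdef
  have hb0 : (0:ℝ) < b := by linarith
  have hb1 : (1:ℝ) ≤ b := by linarith
  have hi0 : (0:ℝ) < i := by exact_mod_cast hi
  set t : ℝ := b ^ (-(2 * (i:ℝ) / 3)) with htdef
  have ht0 : 0 < t := Real.rpow_pos_of_pos hb0 _
  set D := (Nat.divisors i).filter (fun d => Odd d) with hD
  have h1D : 1 ∈ D := by
    simp [hD, Nat.mem_divisors, Nat.one_dvd]
    omega
  set E := D.erase 1 with hE
  set S : ℝ := ∑ d ∈ E, ((ArithmeticFunction.moebius d : ℤ) : ℝ) * b ^ (i / d) with hS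
  have hmemE : ∀ d ∈ E, d ∣ i ∧ 3 ≤ d := by
    intro d hd
    rw [hE, Finset.mem_erase, hD, Finset.mem_filter, Nat.mem_divisors] at hd
    obtain ⟨hne, ⟨hdvd, _⟩, hodd⟩ := hd
    refine ⟨hdvd, ?_⟩
    rcases hodd with ⟨k, hk⟩
    omega
  have hsplit : ∑ d ∈ D, ((ArithmeticFunction.moebius d : ℤ) : ℝ) * b ^ (i / d) = b ^ i + S := by
    rw [← Finset.add_sum_erase D _ h1D, ← hE, ← hS]
    simp
  have hbpow : (0:ℝ) < b ^ i := pow_pos hb0 i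
  have hgai : gai a i = 1 + S / b ^ i := by
    unfold gai fai
    rw [← hbdef, ← hD, hsplit]
    field_simp
  have habs : |S| ≤ 2 * b ^ (i / 3) := by
    have hinj : ∀ d1 ∈ E, ∀ d2 ∈ E, i / d1 = i / d2 → d1 = d2 := by
      intro d1 h1 d2 h2 h
      obtain ⟨hd1, _⟩ := hmemE d1 h1
      obtain ⟨hd2, _⟩ := hmemE d2 h2
      have := Nat.div_div_self hd1 (by omega)
      have := Nat.div_div_self hd2 (by omega)
      rw [← Nat.div_div_self hd1 (by omega : i ≠ 0), h, Nat.div_div_self hd2 (by omega : i ≠ 0)]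
    calc |S| ≤ ∑ d ∈ E, |((ArithmeticFunction.moebius d : ℤ) : ℝ) * b ^ (i / d)| :=
          Finset.abs_sum_le_sum_abs _ _
      _ ≤ ∑ d ∈ E, b ^ (i / d) := by
          apply Finset.sum_le_sum
          intro d _
          rw [abs_mul, abs_of_nonneg (by positivity : (0:ℝ) ≤ b ^ (i / d))]
          have h1 : |((ArithmeticFunction.moebius d : ℤ) : ℝ)| ≤ 1 := by
            have := ArithmeticFunction.abs_moebius_le_one (n := d)
            exact_mod_cast (by exact_mod_cast this : |((ArithmeticFunction.moebius d : ℤ) : ℝ)| ≤ (1:ℝ))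
          nlinarith [pow_nonneg (le_of_lt hb0) (i / d), abs_nonneg ((ArithmeticFunction.moebius d : ℤ) : ℝ)]
      _ = ∑ k ∈ E.image (fun d => i / d), b ^ k := (Finset.sum_image hinj).symm
      _ ≤ ∑ k ∈ Finset.range (i / 3 + 1), b ^ k := by
          apply Finset.sum_le_sum_of_subset_of_nonneg
          · intro k hk
            rw [Finset.mem_image] at hk
            obtain ⟨d, hd, rfl⟩ := hk
            obtain ⟨hdvd, h3⟩ := hmemE d hd
            have : i / d ≤ i / 3 := Nat.div_le_div_left h3 (by norm_num)
            rw [Finset.mem_range]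
            omega
          · intro k _ _
            positivity
      _ ≤ 2 * b ^ (i / 3) := geom_sum_le_two_mul b hb2 _
  have hkey : 2 * b ^ (i / 3) / b ^ i ≤ 2 * t := by
    rw [div_le_iff₀ hbpow]
    have h1 : (b:ℝ) ^ (i / 3 : ℕ) ≤ b ^ ((i:ℝ) / 3) := by
      rw [← Real.rpow_natCast b (i / 3)]
      exact Real.rpow_le_rpow_of_exponent_le hb1 (Nat.cast_div_le.trans (by norm_num))
    have h2 : t * b ^ i = b ^ ((i:ℝ) / 3) := by
      rw [htdef, ← Real.rpow_natCast b i, ← Real.rpow_add hb0]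
      congr 1
      ring
    linarith
  have hrange : 1 - 2 * t ≤ gai a i ∧ gai a i ≤ 1 + 2 * t := by
    have h1 : |S / b ^ i| ≤ 2 * t := by
      rw [abs_div, abs_of_pos hbpow]
      calc |S| / b ^ i ≤ 2 * b ^ (i / 3) / b ^ i := by
            gcongr
          _ ≤ 2 * t := hkey
    rw [hgai]
    constructor <;> nlinarith [abs_le.mp h1]
  obtain ⟨hlo, hhi⟩ := hrange
  rcases lt_or_ge i 3 with hsmall | hbig
  · -- i = 1 or 2 : E = ∅, gai = 1
    have hEempty : E = ∅ := by
      rw [Finset.eq_empty_iff_forall_notMem]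
      intro d hd
      obtain ⟨hdvd, h3⟩ := hmemE d hd
      have := Nat.le_of_dvd (by omega) hdvd
      omega
    have hS0 : S = 0 := by rw [hS, hEempty]; simp
    have hg1 : gai a i = 1 := by rw [hgai, hS0]; simp
    rw [hg1]
    constructor
    · calc Real.exp (-(4 * t)) ≤ Real.exp 0 := Real.exp_le_exp.mpr (by linarith)
        _ = 1 := Real.exp_zero
    · calc (1:ℝ) = Real.exp 0 := Real.exp_zero.symm
        _ ≤ Real.exp (4 * t) := Real.exp_le_exp.mpr (by linarith)
  · -- i ≥ 3 : t ≤ 1/4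
    have ht4 : t ≤ 1 / 4 := by
      have h3 : (3:ℝ) ≤ i := by exact_mod_cast hbig
      have hstep1 : t ≤ (2:ℝ) ^ (-(2 * (i:ℝ) / 3)) := by
        rw [htdef, Real.rpow_neg (le_of_lt hb0), Real.rpow_neg (by norm_num : (0:ℝ) ≤ 2)]
        have h2b : (2:ℝ) ^ (2 * (i:ℝ) / 3) ≤ b ^ (2 * (i:ℝ) / 3) :=
          Real.rpow_le_rpow (by norm_num) hb2 (by positivity)
        exact inv_anti₀ (Real.rpow_pos_of_pos (by norm_num) _) h2b
      have hstep2 : (2:ℝ) ^ (-(2 * (i:ℝ) / 3)) ≤ (2:ℝ) ^ (-2 : ℝ) :=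
        Real.rpow_le_rpow_of_exponent_le (by norm_num) (by linarith)
      have hstep3 : (2:ℝ) ^ (-2 : ℝ) = 1 / 4 := by
        rw [show (-2:ℝ) = ((-2:ℤ):ℝ) by norm_num, Real.rpow_intCast]
        norm_num
      linarith
    constructor
    · -- exp (-(4t)) ≤ gai
      have h1 : 4 * t + 1 ≤ Real.exp (4 * t) := by
        have := Real.add_one_le_exp (4 * t); linarith
      have h2 : Real.exp (-(4 * t)) * Real.exp (4 * t) = 1 := by
        rw [← Real.exp_add]; simp
      have hpos : 0 < Real.exp (-(4 * t)) := Real.exp_pos _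
      have h3 : Real.exp (-(4 * t)) ≤ 1 - 2 * t := by
        nlinarith
      linarith
    · have h1 : 2 * t + 1 ≤ Real.exp (2 * t) := by
        have := Real.add_one_le_exp (2 * t); linarith
      have h2 : Real.exp (2 * t) ≤ Real.exp (4 * t) := Real.exp_le_exp.mpr (by linarith)
      linarith
end

section
/- With f_{a,i} = (1/(2i)) ∑_{d | i, d odd} μ(d) (2a)^{i/d} and g_{a,i} = 2i f_{a,i} / (2a)^i, for all integers a ≥ 1 and i ≥ 3 we have the bounds 1 - 2(2a)^{-2i/3} ≤ g_{a,i} ≤ 1 + 2(2a)^{-2i/3}. -/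
lemma geom_aux (x : ℝ) (hx : 2 ≤ x) (m : ℕ) :
    ∑ k ∈ Finset.Icc 1 m, x ^ k ≤ 2 * x ^ m := by
  induction m with
  | zero => simp
  | succ m ih =>
    rw [Finset.sum_Icc_succ_top (by omega)]
    have hp : (0:ℝ) ≤ x ^ m := by positivity
    have h1 : x ^ (m+1) = x ^ m * x := by ring
    nlinarith [ih]

/-- For all `a ≥ 1` and `i ≥ 3`:
`1 - 2(2a)^{-2i/3} ≤ g_{a,i} ≤ 1 + 2(2a)^{-2i/3}`. -/
theorem gai_linear_bounds (a i : ℕ) (ha : 1 ≤ a) (hi : 3 ≤ i) :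
    1 - 2 * (2 * (a : ℝ)) ^ (-(2 * (i : ℝ) / 3)) ≤ gai a i
      ∧ gai a i ≤ 1 + 2 * (2 * (a : ℝ)) ^ (-(2 * (i : ℝ) / 3)) := by
  have hxa : (1:ℝ) ≤ (a:ℝ) := by exact_mod_cast ha
  set x : ℝ := 2 * (a:ℝ) with hxdef
  have hx2 : (2:ℝ) ≤ x := by rw [hxdef]; linarith
  have hx0 : (0:ℝ) < x := by linarith
  have hx1 : (1:ℝ) ≤ x := by linarith
  have hine : i ≠ 0 := by omega
  have hire : (i:ℝ) ≠ 0 := by exact_mod_cast hine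
  set T := (Nat.divisors i).filter (fun d => Odd d) with hT
  set S : ℝ := ∑ d ∈ T, ((ArithmeticFunction.moebius d : ℤ) : ℝ) * x ^ (i / d) with hS
  have hg : gai a i = S / x ^ i := by
    unfold gai fai
    rw [← hxdef, ← hT, ← hS]
    field_simp
  have h1T : (1:ℕ) ∈ T := by
    simp [hT, Nat.mem_divisors, hine]
  set E : ℝ := ∑ d ∈ T.erase 1, ((ArithmeticFunction.moebius d : ℤ) : ℝ) * x ^ (i / d)
    with hE
  have hsplit : S = x ^ i + E := by
    rw [hS, ← Finset.add_sum_erase _ _ h1T, hE]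
    simp
  -- bound |E|
  have step1 : |E| ≤ ∑ d ∈ T.erase 1, x ^ (i / d) := by
    refine (Finset.abs_sum_le_sum_abs _ _).trans (Finset.sum_le_sum ?_)
    intro d hd
    rw [abs_mul]
    have hm : |((ArithmeticFunction.moebius d : ℤ) : ℝ)| ≤ 1 := by
      have := ArithmeticFunction.abs_moebius_le_one (n := d)
      exact_mod_cast this
    have hxp : (0:ℝ) ≤ x ^ (i / d) := by positivity
    calc |((ArithmeticFunction.moebius d : ℤ) : ℝ)| * |x ^ (i / d)|
        = |((ArithmeticFunction.moebius d : ℤ) : ℝ)| * x ^ (i / d) := by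
          rw [abs_of_nonneg hxp]
      _ ≤ 1 * x ^ (i / d) := by
          exact mul_le_mul_of_nonneg_right hm hxp
      _ = x ^ (i / d) := one_mul _
  have hmem : ∀ d ∈ T.erase 1, d ∣ i ∧ 3 ≤ d := by
    intro d hd
    rw [Finset.mem_erase, hT, Finset.mem_filter, Nat.mem_divisors] at hd
    obtain ⟨hd1, ⟨hdvd, _⟩, hodd⟩ := hd
    refine ⟨hdvd, ?_⟩
    rcases hodd with ⟨k, hk⟩
    omega
  have hinj : ∀ d1 ∈ T.erase 1, ∀ d2 ∈ T.erase 1, i / d1 = i / d2 → d1 = d2 := by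
    intro d1 h1 d2 h2 h
    have hd1 := (hmem d1 h1).1
    have hd2 := (hmem d2 h2).1
    have e1 : i / (i / d1) = d1 := Nat.div_div_self hd1 hine
    have e2 : i / (i / d2) = d2 := Nat.div_div_self hd2 hine
    rw [← e1, ← e2, h]
  have himg : ∑ d ∈ T.erase 1, x ^ (i / d)
      = ∑ k ∈ (T.erase 1).image (fun d => i / d), x ^ k :=
    (Finset.sum_image hinj).symm
  have step2 : ∑ d ∈ T.erase 1, x ^ (i / d) ≤ ∑ k ∈ Finset.Icc 1 (i / 3), x ^ k := by
    rw [himg]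
    apply Finset.sum_le_sum_of_subset_of_nonneg
    · intro k hk
      rw [Finset.mem_image] at hk
      obtain ⟨d, hd, rfl⟩ := hk
      obtain ⟨hdvd, hd3⟩ := hmem d hd
      rw [Finset.mem_Icc]
      constructor
      · have hdi : d ≤ i := Nat.le_of_dvd (by omega) hdvd
        exact (Nat.one_le_div_iff (by omega)).2 hdi
      · exact Nat.div_le_div_left hd3 (by omega)
    · intro k _ _; positivity
  have step3 : ∑ k ∈ Finset.Icc 1 (i / 3), x ^ k ≤ 2 * x ^ (i / 3) :=
    geom_aux x hx2 _
  have step4 : x ^ (i / 3 : ℕ) ≤ x ^ ((i:ℝ) / 3) := by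
    rw [← Real.rpow_natCast x (i / 3)]
    apply Real.rpow_le_rpow_of_exponent_le hx1
    exact Nat.cast_div_le
  have hEb : |E| ≤ 2 * x ^ ((i:ℝ) / 3) := by
    calc |E| ≤ ∑ d ∈ T.erase 1, x ^ (i / d) := step1
      _ ≤ ∑ k ∈ Finset.Icc 1 (i / 3), x ^ k := step2
      _ ≤ 2 * x ^ (i / 3 : ℕ) := step3
      _ ≤ 2 * x ^ ((i:ℝ) / 3) := by linarith
  have hxipos : (0:ℝ) < x ^ i := by positivity
  have hkey : x ^ ((i:ℝ) / 3) / x ^ i = x ^ (-(2 * (i:ℝ) / 3)) := by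
    rw [← Real.rpow_natCast x i, ← Real.rpow_sub hx0]
    congr 1
    ring
  have habs : |gai a i - 1| ≤ 2 * x ^ (-(2 * (i:ℝ) / 3)) := by
    rw [hg, hsplit]
    have : (x ^ i + E) / x ^ i - 1 = E / x ^ i := by
      field_simp
      ring
    rw [this, abs_div, abs_of_pos hxipos]
    rw [div_le_iff₀ hxipos]
    calc |E| ≤ 2 * x ^ ((i:ℝ) / 3) := hEb
      _ = 2 * (x ^ ((i:ℝ) / 3) / x ^ i) * x ^ i := by field_simp
      _ = 2 * x ^ (-(2 * (i:ℝ) / 3)) * x ^ i := by rw [hkey]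
  rw [abs_le] at habs
  constructor <;> linarith [habs.1, habs.2]
end

section
/- For each fixed s > 0, let t = t(n) ∈ (0,1) be the unique solution of 4t/(1+t)² = e^{-s/√n}. Then as n → ∞, t = 1 - 2√s·n^{-1/4} + 2s·n^{-1/2} - (3/2)s^{3/2}·n^{-3/4} + s²·n^{-1} + O(n^{-5/4}), and consequently log(2(1-t)/((1+t)·log(1/t))) = -s/(3√n) + s²/(45n) + O(n^{-5/4}). -/
set_option maxHeartbeats 1000000
open Real Finset


lemma exp_taylor (x : ℝ) (h0 : 0 ≤ x) (h1 : x ≤ 1) :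
    |Real.exp (-x) - (1 - x + x^2/2)| ≤ (2/9)*x^3 := by
  have h := Real.exp_bound (x := -x) (by rw [abs_neg, abs_of_nonneg h0]; exact h1) (n := 3) (by norm_num)
  rw [abs_neg, abs_of_nonneg h0] at h
  have hsum : ∑ m ∈ Finset.range 3, (-x) ^ m / m.factorial = 1 - x + x^2/2 := by
    simp [Finset.sum_range_succ]; ring
  rw [hsum] at h
  calc |Real.exp (-x) - (1 - x + x^2/2)| ≤ x^3 * ((3:ℕ).succ / ((3:ℕ).factorial * 3)) := h
    _ ≤ (2/9)*x^3 := by norm_num [Nat.factorial]; ring_nf; norm_num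

lemma w_taylor (x : ℝ) (h0 : 0 ≤ x) (h1 : x ≤ 1) :
    |(1 - Real.exp (-x)) - (x - x^2/2)| ≤ (2/9)*x^3 := by
  have := exp_taylor x h0 h1
  rw [show (1 - Real.exp (-x)) - (x - x^2/2) = -(Real.exp (-x) - (1 - x + x^2/2)) by ring, abs_neg]
  exact this

lemma u_approx (x : ℝ) (h0 : 0 < x) (h1 : x ≤ 1/10) :
    |Real.sqrt (1 - Real.exp (-x)) - (Real.sqrt x - (Real.sqrt x)^3/4)| ≤ (Real.sqrt x)^5 := by
  set y := Real.sqrt x with hy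
  have hy0 : 0 < y := Real.sqrt_pos.mpr h0
  have hyx : y^2 = x := Real.sq_sqrt h0.le
  have hy1 : y ≤ 1 := by
    rw [show (1:ℝ) = Real.sqrt 1 by simp [Real.sqrt_one]]
    exact Real.sqrt_le_sqrt (by linarith)
  set v := y - y^3/4 with hv
  have hvpos : y/2 ≤ v := by nlinarith
  set w := 1 - Real.exp (-x) with hw
  have hw0 : 0 ≤ w := by
    have : Real.exp (-x) ≤ 1 := Real.exp_le_one_iff.mpr (by linarith)
    linarith
  set u := Real.sqrt w with hu
  have hu0 : 0 ≤ u := Real.sqrt_nonneg _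
  have huw : u^2 = w := Real.sq_sqrt hw0
  have hv2 : v^2 = x - x^2/2 + x^3/16 := by
    have : v^2 = y^2 - y^2*y^2/2 + y^2*y^2*y^2/16 := by ring
    rw [this, hyx]; ring
  have hwv : |w - v^2| ≤ (1/2)*x^3 := by
    have h2 := w_taylor x h0.le (by linarith)
    rw [hv2]
    have : w - (x - x^2/2 + x^3/16) = (w - (x - x^2/2)) - x^3/16 := by ring
    rw [this]
    have hx3 : 0 ≤ x^3 := by positivity
    calc |(w - (x - x^2/2)) - x^3/16| ≤ |w - (x - x^2/2)| + |x^3/16| := abs_sub _ _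
      _ ≤ (2/9)*x^3 + x^3/16 := by
          rw [abs_of_nonneg (by positivity : (0:ℝ) ≤ x^3/16)]; linarith
      _ ≤ (1/2)*x^3 := by linarith
  have hupv : (0:ℝ) < u + v := by
    have : 0 < v := lt_of_lt_of_le (by linarith) hvpos
    linarith
  have key : |u - v| * (y/2) ≤ (1/2)*x^3 := by
    calc |u - v| * (y/2) ≤ |u - v| * (u + v) :=
          mul_le_mul_of_nonneg_left (by linarith) (abs_nonneg _)
      _ = |u^2 - v^2| := by
          rw [← abs_of_nonneg hupv.le, ← abs_mul]
          ring_nf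
      _ ≤ (1/2)*x^3 := by rw [huw]; exact hwv
  have key2 : |u - v| * (y/2) ≤ y^5 * (y/2) := by
    have : (1/2)*x^3 = y^5 * (y/2) := by rw [← hyx]; ring
    linarith [key]
  exact le_of_mul_le_mul_right key2 (by linarith)

lemma u_eq (x t : ℝ) (h0 : 0 < x) (ht : t ∈ Set.Ioo (0:ℝ) 1)
    (heq : 4*t/(1+t)^2 = Real.exp (-x)) :
    (1 - t)/(1 + t) = Real.sqrt (1 - Real.exp (-x)) := by
  obtain ⟨ht0, ht1⟩ := ht
  have h1t : (0:ℝ) < 1 + t := by linarith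
  have hne : ((1+t)^2 : ℝ) ≠ 0 := by positivity
  have h4 : 4*t = Real.exp (-x) * (1+t)^2 := by
    field_simp at heq; linarith [heq]
  have hsq : ((1-t)/(1+t))^2 = 1 - Real.exp (-x) := by
    field_simp
    nlinarith [h4]
  rw [← hsq, Real.sqrt_sq (div_nonneg (by linarith) (by linarith))]

lemma t_eq (x t : ℝ) (h0 : 0 < x) (ht : t ∈ Set.Ioo (0:ℝ) 1)
    (heq : 4*t/(1+t)^2 = Real.exp (-x)) :
    t * (1 + Real.sqrt (1 - Real.exp (-x))) = 1 - Real.sqrt (1 - Real.exp (-x)) := by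
  obtain ⟨ht0, ht1⟩ := ht
  have h1t : (0:ℝ) < 1 + t := by linarith
  have := u_eq x t h0 ⟨ht0, ht1⟩ heq
  set u := Real.sqrt (1 - Real.exp (-x))
  have : 1 - t = u * (1 + t) := by
    field_simp at this; linarith [this]
  nlinarith [this]

lemma partA (x t : ℝ) (h0 : 0 < x) (h1 : x ≤ 1/10) (ht : t ∈ Set.Ioo (0:ℝ) 1)
    (heq : 4*t/(1+t)^2 = Real.exp (-x)) :
    |t - (1 - 2*Real.sqrt x + 2*x - (3/2)*(x*Real.sqrt x) + x^2)| ≤ 7 * (x^2 * Real.sqrt x) := by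
  set y := Real.sqrt x with hy
  have hy0 : 0 < y := Real.sqrt_pos.mpr h0
  have hyx : y^2 = x := Real.sq_sqrt h0.le
  have hy1 : y ≤ 1 := by
    rw [show (1:ℝ) = Real.sqrt 1 by simp, hy]
    exact Real.sqrt_le_sqrt (by linarith)
  set u := Real.sqrt (1 - Real.exp (-x)) with hu
  have hu0 : 0 ≤ u := Real.sqrt_nonneg _
  have hts := t_eq x t h0 ht heq
  have hua := u_approx x h0 h1
  rw [← hy] at hua
  set P : ℝ := 1 - 2*y + 2*y^2 - (3/2)*y^3 + y^4 with hP
  have hPx : 1 - 2*Real.sqrt x + 2*x - (3/2)*(x*Real.sqrt x) + x^2 = P := by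
    rw [hP, ← hy, ← hyx]; ring
  rw [hPx]
  set v := y - y^3/4 with hv
  set e := u - v with he
  have he5 : |e| ≤ y^5 := hua
  have hQ : (1 - v) - P*(1 + v) = -(1/2)*y^5 - (3/8)*y^6 + (1/4)*y^7 := by
    rw [hP, hv]; ring
  have h1P : |1 + P| ≤ 5 := by
    rw [abs_le]; constructor <;> rw [hP] <;> nlinarith [sq_nonneg y, sq_nonneg (1-y), sq_nonneg (y^2), pow_le_one₀ hy0.le hy1 (n:=3), pow_le_one₀ hy0.le hy1 (n:=4)]
  have hdiff : (t - P) * (1 + u) = (1 - u) - P*(1 + u) := by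
    nlinarith [hts]
  have habs : |(1 - u) - P*(1 + u)| ≤ 7 * y^5 := by
    have hrw : (1 - u) - P*(1 + u) = ((1 - v) - P*(1 + v)) - e*(1 + P) := by
      rw [he]; ring
    rw [hrw, hQ]
    have h6 : y^6 ≤ y^5 := pow_le_pow_of_le_one hy0.le hy1 (by norm_num)
    have h7 : y^7 ≤ y^5 := pow_le_pow_of_le_one hy0.le hy1 (by norm_num)
    have h70 : 0 < y^7 := pow_pos hy0 7
    have h60 : 0 < y^6 := pow_pos hy0 6
    calc |(-(1/2)*y^5 - (3/8)*y^6 + (1/4)*y^7) - e*(1+P)|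
        ≤ |(-(1/2)*y^5 - (3/8)*y^6 + (1/4)*y^7)| + |e*(1+P)| := abs_sub _ _
      _ ≤ 2*y^5 + y^5 * 5 := by
          have b1 : |(-(1/2)*y^5 - (3/8)*y^6 + (1/4)*y^7)| ≤ 2*y^5 := by
            rw [abs_le]; constructor <;> nlinarith [pow_pos hy0 5]
          have b2 : |e*(1+P)| ≤ y^5 * 5 := by
            rw [abs_mul]
            exact mul_le_mul he5 h1P (abs_nonneg _) (by positivity)
          linarith
      _ = 7 * y^5 := by ring
  have hfin : |t - P| * 1 ≤ 7*y^5 := by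
    calc |t - P| * 1 ≤ |t - P| * (1 + u) := by
          apply mul_le_mul_of_nonneg_left (by linarith) (abs_nonneg _)
      _ = |(t - P)*(1+u)| := by rw [abs_mul, abs_of_nonneg (by linarith : (0:ℝ) ≤ 1+u)]
      _ = |(1 - u) - P*(1 + u)| := by rw [hdiff]
      _ ≤ 7*y^5 := habs
  have : y^5 = x^2 * y := by rw [← hyx]; ring
  rw [mul_one] at hfin
  calc |t - P| ≤ 7*y^5 := hfin
    _ = 7*(x^2 * Real.sqrt x) := by rw [this, hy]

lemma log_sub_log (u : ℝ) (h0 : 0 < u) (h1 : u ≤ 1/3) :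
    |Real.log (1+u) - Real.log (1-u) - 2*u*(1 + u^2/3 + u^4/5)| ≤ 3*u^7 := by
  have hu1 : |u| < 1 := by rw [abs_of_pos h0]; linarith
  have hmu1 : |(-u)| < 1 := by rw [abs_neg]; exact hu1
  have A := Real.abs_log_sub_add_sum_range_le hu1 6
  have B := Real.abs_log_sub_add_sum_range_le hmu1 6
  rw [abs_of_pos h0] at A
  rw [abs_neg, abs_of_pos h0] at B
  have hSA : (∑ i ∈ range 6, u^(i+1)/(i+1)) = u + u^2/2 + u^3/3 + u^4/4 + u^5/5 + u^6/6 := by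
    simp [Finset.sum_range_succ]; ring
  have hSB : (∑ i ∈ range 6, (-u)^(i+1)/(i+1)) = -u + u^2/2 - u^3/3 + u^4/4 - u^5/5 + u^6/6 := by
    simp [Finset.sum_range_succ]; norm_num; ring
  rw [hSA] at A
  rw [hSB, show (1 - (-u)) = 1 + u by ring] at B
  have hden : u^7/(1-u) ≤ (3/2)*u^7 := by
    rw [div_le_iff₀ (by linarith)]
    nlinarith [pow_pos h0 7]
  set EA := (u + u^2/2 + u^3/3 + u^4/4 + u^5/5 + u^6/6) + Real.log (1-u) with hEA
  set EB := (-u + u^2/2 - u^3/3 + u^4/4 - u^5/5 + u^6/6) + Real.log (1+u) with hEB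
  have hrw : Real.log (1+u) - Real.log (1-u) - 2*u*(1 + u^2/3 + u^4/5) = EB - EA := by
    rw [hEA, hEB]; ring
  rw [hrw]
  calc |EB - EA| ≤ |EB| + |EA| := abs_sub _ _
    _ ≤ (3/2)*u^7 + (3/2)*u^7 := add_le_add (le_trans B hden) (le_trans A hden)
    _ = 3*u^7 := by ring

lemma log1p_quad (a : ℝ) (h0 : 0 ≤ a) (h1 : a ≤ 1/9) :
    |Real.log (1+a) - (a - a^2/2)| ≤ (9/8)*a^3 := by
  have hma : |(-a)| < 1 := by rw [abs_neg, abs_of_nonneg h0]; linarith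
  have A := Real.abs_log_sub_add_sum_range_le hma 2
  rw [abs_neg, abs_of_nonneg h0] at A
  have hS : (∑ i ∈ range 2, (-a)^(i+1)/(i+1)) = -a + a^2/2 := by
    simp [Finset.sum_range_succ]; norm_num
  rw [hS, show (1 - (-a)) = 1 + a by ring] at A
  have hden : a^3/(1-a) ≤ (9/8)*a^3 := by
    rcases eq_or_lt_of_le h0 with h|h
    · simp [← h]
    · rw [div_le_iff₀ (by linarith)]
      nlinarith [pow_pos h 3]
  calc |Real.log (1+a) - (a - a^2/2)| = |(-a + a^2/2) + Real.log (1+a)| := by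
        rw [abs_sub_comm, ← abs_neg]; congr 1; ring
    _ ≤ a^3/(1-a) := A
    _ ≤ (9/8)*a^3 := hden

lemma quad_est (u a ε : ℝ) (h0 : 0 < u) (h1 : u ≤ 1/3)
    (ha_eq : a = u^2/3 + u^4/5 + ε) (hεb : |ε| ≤ (3/2)*u^6) :
    0 ≤ a ∧ a ≤ u^2 ∧ |a - a^2/2 - (u^2/3 + 13*u^4/90)| ≤ (13/6)*u^6 := by
  obtain ⟨hε1, hε2⟩ := abs_le.mp hεb
  have hu2 : u^2 ≤ 1/9 := by nlinarith
  have hu4 : u^4 ≤ u^2 := pow_le_pow_of_le_one h0.le (by linarith) (by norm_num)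
  have hu40 : 0 < u^4 := pow_pos h0 4
  have hu60 : 0 < u^6 := pow_pos h0 6
  have hu64 : u^6 ≤ (1/9)*u^4 := by nlinarith
  have ha0 : 0 ≤ a := by nlinarith
  have hau2 : a ≤ u^2 := by nlinarith
  refine ⟨ha0, hau2, ?_⟩
  have hid : a - a^2/2 - (u^2/3 + 13*u^4/90) = ε - (a - u^2/3)*(a + u^2/3)/2 := by
    rw [ha_eq]; ring
  have hb1 : |a - u^2/3| ≤ u^4 := by rw [abs_le]; constructor <;> nlinarith
  have hb2 : |a + u^2/3| ≤ (4/3)*u^2 := by rw [abs_le]; constructor <;> nlinarith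
  have hprod : |(a - u^2/3)*(a + u^2/3)| ≤ u^4 * ((4/3)*u^2) := by
    rw [abs_mul]; exact mul_le_mul hb1 hb2 (abs_nonneg _) (by positivity)
  have h23 : u^4 * ((4/3)*u^2) = (4/3)*u^6 := by ring
  rw [hid]
  calc |ε - (a - u^2/3)*(a + u^2/3)/2| ≤ |ε| + |(a - u^2/3)*(a + u^2/3)|/2 := by
        rw [show (a - u^2/3)*(a + u^2/3)/2 = ((a - u^2/3)*(a + u^2/3))*(1/2) by ring]
        calc |ε - (a - u^2/3)*(a + u^2/3)*(1/2)| ≤ |ε| + |(a - u^2/3)*(a + u^2/3)*(1/2)| := abs_sub _ _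
          _ = |ε| + |(a - u^2/3)*(a + u^2/3)|/2 := by
                rw [abs_mul, abs_of_nonneg (by norm_num : (0:ℝ) ≤ 1/2)]; ring
    _ ≤ (3/2)*u^6 + (4/3)*u^6/2 := by rw [← h23]; linarith [hεb, hprod]
    _ ≤ (13/6)*u^6 := by linarith

lemma partB_u (u : ℝ) (h0 : 0 < u) (h1 : u ≤ 1/3) :
    |Real.log (2*u / (Real.log (1+u) - Real.log (1-u))) + (u^2/3 + 13*u^4/90)| ≤ 4*u^6 := by
  have hδ := log_sub_log u h0 h1
  obtain ⟨L, hL⟩ : ∃ L, Real.log (1+u) - Real.log (1-u) = L := ⟨_, rfl⟩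
  rw [hL] at hδ ⊢
  have h2u : (0:ℝ) < 2*u := by linarith
  obtain ⟨ε, hε⟩ : ∃ ε, L/(2*u) - (1 + u^2/3 + u^4/5) = ε := ⟨_, rfl⟩
  have hεb : |ε| ≤ (3/2)*u^6 := by
    have h1' : ε = (L - 2*u*(1 + u^2/3 + u^4/5))/(2*u) := by
      rw [← hε, sub_div, mul_div_cancel_left₀ _ (ne_of_gt h2u)]
    rw [h1', abs_div, abs_of_pos h2u, div_le_iff₀ h2u]
    calc |L - 2*u*(1 + u^2/3 + u^4/5)| ≤ 3*u^7 := hδ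
      _ = (3/2)*u^6*(2*u) := by ring
  obtain ⟨a, ha⟩ : ∃ a, L/(2*u) - 1 = a := ⟨_, rfl⟩
  have ha_eq : a = u^2/3 + u^4/5 + ε := by rw [← ha, ← hε]; ring
  obtain ⟨ha0, hau2, hmain⟩ := quad_est u a ε h0 h1 ha_eq hεb
  have hu2 : u^2 ≤ 1/9 := by nlinarith
  have ha19 : a ≤ 1/9 := le_trans hau2 hu2
  have hLa : L = 2*u*(1+a) := by
    have : L/(2*u) = 1 + a := by rw [← ha]; ring
    field_simp at this; linarith
  have hlog : Real.log (2*u/L) = -Real.log (1+a) := by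
    rw [hLa, show 2*u/(2*u*(1+a)) = (1+a)⁻¹ by field_simp, Real.log_inv]
  rw [hlog]
  have hq := log1p_quad a ha0 ha19
  have ha3 : a^3 ≤ u^6 := by
    calc a^3 ≤ (u^2)^3 := pow_le_pow_left₀ ha0 hau2 3
      _ = u^6 := by ring
  have hu60 : 0 < u^6 := pow_pos h0 6
  calc |(-Real.log (1+a)) + (u^2/3 + 13*u^4/90)|
      = |Real.log (1+a) - (u^2/3 + 13*u^4/90)| := by rw [← abs_neg]; congr 1; ring
    _ = |(Real.log (1+a) - (a - a^2/2)) + (a - a^2/2 - (u^2/3 + 13*u^4/90))| := by congr 1; ring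
    _ ≤ |Real.log (1+a) - (a - a^2/2)| + |a - a^2/2 - (u^2/3 + 13*u^4/90)| := abs_add_le _ _
    _ ≤ (9/8)*u^6 + (13/6)*u^6 := add_le_add (le_trans hq (by nlinarith)) hmain
    _ ≤ 4*u^6 := by linarith

lemma partB (x t : ℝ) (h0 : 0 < x) (h1 : x ≤ 1/10) (ht : t ∈ Set.Ioo (0:ℝ) 1)
    (heq : 4*t/(1+t)^2 = Real.exp (-x)) :
    |Real.log (2*(1-t)/((1+t)*Real.log (1/t))) - (-x/3 + x^2/45)| ≤ 5*(x^2*Real.sqrt x) := by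
  obtain ⟨ht0, ht1⟩ := ht
  have hex1 : Real.exp (-x) < 1 := Real.exp_lt_one_iff.mpr (by linarith)
  set w : ℝ := 1 - Real.exp (-x) with hwdef
  have hw0 : 0 < w := by simp only [hwdef]; linarith
  have hwx : w ≤ x := by
    have := Real.add_one_le_exp (-x)
    simp only [hwdef]; linarith
  set u := Real.sqrt w with hu
  have hu0 : 0 < u := Real.sqrt_pos.mpr hw0
  have huw : u^2 = w := Real.sq_sqrt hw0.le
  have hu13 : u ≤ 1/3 := by nlinarith
  have hu1 : u < 1 := by nlinarith
  have hts := t_eq x t h0 ⟨ht0, ht1⟩ heq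
  have hue := u_eq x t h0 ⟨ht0, ht1⟩ heq
  rw [← hu] at hts hue
  -- rewrite the argument of the log
  have h1t : (0:ℝ) < 1 + t := by linarith
  have htf : t = (1-u)/(1+u) := by
    rw [eq_div_iff (by linarith : (1:ℝ)+u ≠ 0)]; linarith [hts]
  have hinv : 1/t = (1+u)/(1-u) := by rw [htf, one_div_div]
  have hlog1t : Real.log (1/t) = Real.log (1+u) - Real.log (1-u) := by
    rw [hinv, Real.log_div (by linarith) (by linarith)]
  have harg : 2*(1-t)/((1+t)*Real.log (1/t)) = 2*u/(Real.log (1+u) - Real.log (1-u)) := by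
    rw [← hlog1t, ← div_div, mul_div_assoc, hue]
  rw [harg]
  have hB := partB_u u hu0 hu13
  -- estimates converting u to x
  have hwt := w_taylor x h0.le (by linarith)
  rw [← hwdef] at hwt
  obtain ⟨hwt1, hwt2⟩ := abs_le.mp hwt
  have hx3 : 0 < x^3 := pow_pos h0 3
  have hwmx : |w - x| ≤ (3/5)*x^2 := by
    rw [abs_le]; constructor <;> nlinarith
  have hw2x2 : |w^2 - x^2| ≤ (6/5)*x^3 := by
    have h2 : |w + x| ≤ 2*x := by rw [abs_le]; constructor <;> nlinarith
    calc |w^2 - x^2| = |w - x| * |w + x| := by rw [← abs_mul]; congr 1; ring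
      _ ≤ ((3/5)*x^2) * (2*x) := mul_le_mul hwmx h2 (abs_nonneg _) (by positivity)
      _ = (6/5)*x^3 := by ring
  have hu6 : u^6 ≤ x^3 := by
    have : u^6 = w^3 := by rw [← huw]; ring
    rw [this]
    exact pow_le_pow_left₀ hw0.le hwx 3
  have hR : |(-(u^2/3 + 13*u^4/90)) - (-x/3 + x^2/45)| ≤ (1/3)*x^3 := by
    have h4 : u^4 = w^2 := by rw [← huw]; ring
    have hid : (-(u^2/3 + 13*u^4/90)) - (-x/3 + x^2/45)
        = -((w - (x - x^2/2))/3) - 13*(w^2 - x^2)/90 := by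
      rw [h4, huw]; ring
    rw [hid]
    have e1 : |w - (x - x^2/2)| ≤ (2/9)*x^3 := hwt
    calc |(-((w - (x - x^2/2))/3)) - 13*(w^2 - x^2)/90|
        ≤ |(w - (x - x^2/2))/3| + |13*(w^2 - x^2)/90| := by
          rw [show (-((w - (x - x^2/2))/3)) - 13*(w^2 - x^2)/90
            = -(((w - (x - x^2/2))/3) + 13*(w^2 - x^2)/90) by ring, abs_neg]
          exact abs_add_le _ _
      _ ≤ (2/9)*x^3/3 + 13*((6/5)*x^3)/90 := by
          have i1 : |(w - (x - x^2/2))/3| = |w - (x - x^2/2)|/3 := by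
            rw [abs_div, abs_of_nonneg (by norm_num : (0:ℝ) ≤ 3)]
          have i2 : |13*(w^2 - x^2)/90| = 13*|w^2 - x^2|/90 := by
            rw [abs_div, abs_mul, abs_of_nonneg (by norm_num : (0:ℝ) ≤ 13),
              abs_of_nonneg (by norm_num : (0:ℝ) ≤ 90)]
          rw [i1, i2]
          gcongr
      _ ≤ (1/3)*x^3 := by nlinarith
    done
  have hcomb : |Real.log (2*u/(Real.log (1+u) - Real.log (1-u))) - (-x/3 + x^2/45)|
      ≤ 4*x^3 + (1/3)*x^3 := by
    calc |Real.log (2*u/(Real.log (1+u) - Real.log (1-u))) - (-x/3 + x^2/45)|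
        = |(Real.log (2*u/(Real.log (1+u) - Real.log (1-u))) + (u^2/3 + 13*u^4/90))
            + ((-(u^2/3 + 13*u^4/90)) - (-x/3 + x^2/45))| := by congr 1; ring
      _ ≤ _ + _ := abs_add_le _ _
      _ ≤ 4*u^6 + (1/3)*x^3 := add_le_add hB hR
      _ ≤ 4*x^3 + (1/3)*x^3 := by linarith
  have hxs : x ≤ Real.sqrt x := by
    have hr2 : (Real.sqrt x)^2 = x := Real.sq_sqrt h0.le
    have hr0 : 0 ≤ Real.sqrt x := Real.sqrt_nonneg x
    have hr1 : Real.sqrt x ≤ 1 := by nlinarith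
    nlinarith
  calc |Real.log (2*u/(Real.log (1+u) - Real.log (1-u))) - (-x/3 + x^2/45)|
      ≤ 4*x^3 + (1/3)*x^3 := hcomb
    _ ≤ 5*x^3 := by linarith
    _ = 5*(x^2*x) := by ring
    _ ≤ 5*(x^2*Real.sqrt x) := by nlinarith [sq_nonneg x]

lemma crudeF (x t : ℝ) (h0 : 0 < x) (ht : t ∈ Set.Ioo (0:ℝ) 1)
    (heq : 4*t/(1+t)^2 = Real.exp (-x)) :
    |Real.log (2*(1-t)/((1+t)*Real.log (1/t)))| ≤ x + 3 := by
  obtain ⟨ht0, ht1⟩ := ht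
  have hex1 : Real.exp (-x) < 1 := Real.exp_lt_one_iff.mpr (by linarith)
  have hex0 : 0 < Real.exp (-x) := Real.exp_pos _
  set w : ℝ := 1 - Real.exp (-x) with hwdef
  have hw0 : 0 < w := by simp only [hwdef]; linarith
  have hw1 : w < 1 := by simp only [hwdef]; linarith
  set u := Real.sqrt w with hu
  have hu0 : 0 < u := Real.sqrt_pos.mpr hw0
  have huw : u^2 = w := Real.sq_sqrt hw0.le
  have hu1 : u < 1 := by nlinarith
  have hue := u_eq x t h0 ⟨ht0, ht1⟩ heq
  rw [← hu] at hue
  have h1t : (0:ℝ) < 1 + t := by linarith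
  have h1mt : 1 - t = u * (1 + t) := by
    field_simp at hue; linarith [hue]
  set L := Real.log (1/t) with hL
  have hL1 : 1 - t ≤ L := by
    have := Real.log_le_sub_one_of_pos ht0
    rw [hL, one_div, Real.log_inv]; linarith
  have hL2 : L ≤ (1-t)/t := by
    have := Real.log_le_sub_one_of_pos (show (0:ℝ) < 1/t by positivity)
    rw [hL]; calc Real.log (1/t) ≤ 1/t - 1 := this
      _ = (1-t)/t := by field_simp
  have hLpos : 0 < L := by nlinarith
  set A := 2*(1-t)/((1+t)*L) with hA
  have hA2 : A ≤ 2 := by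
    rw [hA, div_le_iff₀ (by positivity)]
    nlinarith
  have hAt : t ≤ A := by
    rw [hA, le_div_iff₀ (by positivity)]
    have h2 : L * t ≤ 1 - t := by
      calc L * t ≤ ((1-t)/t) * t := by nlinarith
        _ = 1 - t := by field_simp
    nlinarith
  have hApos : 0 < A := lt_of_lt_of_le ht0 hAt
  have hup : Real.log A ≤ 1 := by
    calc Real.log A ≤ Real.log 2 := Real.log_le_log hApos hA2
      _ ≤ 2 - 1 := Real.log_le_sub_one_of_pos (by norm_num)
      _ = 1 := by norm_num
  have htlow : Real.exp (-x)/4 ≤ t := by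
    -- t = (1-u)/(1+u) ≥ (1-u²)/4
    have htf : t = (1-u)/(1+u) := by
      rw [eq_div_iff (by linarith : (1:ℝ)+u ≠ 0)]; linarith [h1mt, hue,
        (by nlinarith [h1mt] : t * (1+u) = 1 - u)]
    have hex : Real.exp (-x) = 1 - u^2 := by rw [huw]; simp [hwdef]
    rw [hex, htf, div_le_div_iff₀ (by norm_num) (by linarith)]
    nlinarith
  have hlow : -x - 3 ≤ Real.log A := by
    have l1 : Real.log (Real.exp (-x)/4) ≤ Real.log t := Real.log_le_log (by positivity) htlow
    have l2 : Real.log t ≤ Real.log A := Real.log_le_log ht0 hAt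
    have l3 : Real.log (Real.exp (-x)/4) = -x - Real.log 4 := by
      rw [Real.log_div (by positivity) (by norm_num), Real.log_exp]
    have l4 : Real.log 4 ≤ 3 := by
      calc Real.log 4 ≤ 4 - 1 := Real.log_le_sub_one_of_pos (by norm_num)
        _ = 3 := by norm_num
    linarith
  rw [abs_le]; exact ⟨by linarith, by linarith⟩

/-- For fixed `s > 0`, let `t = t(n) ∈ (0,1)` be the unique solution of
`4t/(1+t)² = e^{-s/√n}`.  Then
`t = 1 - 2√s n^{-1/4} + 2s n^{-1/2} - (3/2) s^{3/2} n^{-3/4} + s² n^{-1} + O(n^{-5/4})`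
and `log(2(1-t)/((1+t) log(1/t))) = -s/(3√n) + s²/(45 n) + O(n^{-5/4})`, with implied
constants depending only on `s`. -/
theorem t_asymptotics (s : ℝ) (hs : 0 < s) :
    ∃ C > 0, ∀ n : ℕ, 1 ≤ n → ∀ t : ℝ, t ∈ Set.Ioo (0 : ℝ) 1 →
      4 * t / (1 + t) ^ 2 = Real.exp (-s / Real.sqrt n) →
      |t - (1 - 2 * Real.sqrt s * (n : ℝ) ^ (-(1 / 4 : ℝ))
              + 2 * s * (n : ℝ) ^ (-(1 / 2 : ℝ))
              - (3 / 2) * s ^ ((3 : ℝ) / 2) * (n : ℝ) ^ (-(3 / 4 : ℝ))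
              + s ^ 2 * (n : ℝ) ^ (-(1 : ℝ)))|
          ≤ C * (n : ℝ) ^ (-(5 / 4 : ℝ))
        ∧ |Real.log (2 * (1 - t) / ((1 + t) * Real.log (1 / t)))
              - (-s / (3 * Real.sqrt n) + s ^ 2 / (45 * n))|
          ≤ C * (n : ℝ) ^ (-(5 / 4 : ℝ)) := by
  have hs0 : (0:ℝ) ≤ Real.sqrt s := Real.sqrt_nonneg s
  set B : ℝ := 2*s^2 + 2*(s*Real.sqrt s) + 3*Real.sqrt s + 4*s + 9 with hB
  have hBpos : 0 < B := by rw [hB]; positivity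
  set N : ℕ := ⌈(100:ℝ)*s^2⌉₊ + 1 with hN
  have hNr : (100:ℝ)*s^2 ≤ (N:ℝ) := by
    have h := Nat.le_ceil ((100:ℝ)*s^2)
    rw [hN]; push_cast; linarith
  have hN54 : (0:ℝ) ≤ (N:ℝ)^((5:ℝ)/4) := Real.rpow_nonneg (by positivity) _
  set C : ℝ := B * (N:ℝ)^((5:ℝ)/4) + 12*(s^2*Real.sqrt s) + 1 with hC
  have hCpos : 0 < C := by rw [hC]; positivity
  refine ⟨C, hCpos, ?_⟩
  intro n hn1 t ht heq
  have hn1' : (1:ℝ) ≤ (n:ℝ) := by exact_mod_cast hn1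
  have hn0 : (0:ℝ) < (n:ℝ) := by linarith
  have hν0 : 0 < Real.sqrt (n:ℝ) := Real.sqrt_pos.mpr hn0
  have hν2 : (Real.sqrt (n:ℝ))^2 = (n:ℝ) := Real.sq_sqrt hn0.le
  have hν1 : (1:ℝ) ≤ Real.sqrt (n:ℝ) := by nlinarith
  rw [neg_div] at heq
  set x := s / Real.sqrt (n:ℝ) with hxdef
  have hx0 : 0 < x := by rw [hxdef]; positivity
  have hxs : x ≤ s := by rw [hxdef, div_le_iff₀ hν0]; nlinarith
  set m := (n:ℝ)^(-(1/4):ℝ) with hm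
  have hm0 : 0 < m := by rw [hm]; exact Real.rpow_pos_of_pos hn0 _
  have hm2 : (n:ℝ)^(-(1/2):ℝ) = m^2 := by
    rw [hm, ← Real.rpow_natCast ((n:ℝ)^(-(1/4):ℝ)) 2, ← Real.rpow_mul hn0.le]; norm_num
  have hm3 : (n:ℝ)^(-(3/4):ℝ) = m^3 := by
    rw [hm, ← Real.rpow_natCast ((n:ℝ)^(-(1/4):ℝ)) 3, ← Real.rpow_mul hn0.le]; norm_num
  have hm4 : (n:ℝ)^(-(1:ℝ)) = m^4 := by
    rw [hm, ← Real.rpow_natCast ((n:ℝ)^(-(1/4):ℝ)) 4, ← Real.rpow_mul hn0.le]; norm_num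
  have hm5 : (n:ℝ)^(-(5/4):ℝ) = m^5 := by
    rw [hm, ← Real.rpow_natCast ((n:ℝ)^(-(1/4):ℝ)) 5, ← Real.rpow_mul hn0.le]; norm_num
  have hsqrtn : Real.sqrt (n:ℝ) = (n:ℝ)^((1/2):ℝ) := Real.sqrt_eq_rpow _
  have hx2 : x = s * m^2 := by
    rw [hxdef, hsqrtn, div_eq_mul_inv, ← Real.rpow_neg hn0.le, hm2]
  have hsx : Real.sqrt x = Real.sqrt s * m := by
    rw [hx2, Real.sqrt_mul hs.le, Real.sqrt_sq hm0.le]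
  have hs32 : s ^ ((3:ℝ)/2) = s * Real.sqrt s := by
    rw [show ((3:ℝ)/2) = (1:ℝ) + (1/2:ℝ) by norm_num, Real.rpow_add hs, Real.rpow_one,
      ← Real.sqrt_eq_rpow]
  have htarget2 : -x/3 + x^2/45 = -s/(3*Real.sqrt (n:ℝ)) + s^2/(45*(n:ℝ)) := by
    rw [hxdef, div_pow, hν2]; ring
  by_cases hcase : N ≤ n
  · -- large n : asymptotic regime
    have hnN : (N:ℝ) ≤ (n:ℝ) := by exact_mod_cast hcase
    have hsn : 10*s ≤ Real.sqrt (n:ℝ) := by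
      have h := Real.sqrt_le_sqrt (show (10*s)^2 ≤ (n:ℝ) by nlinarith)
      rwa [Real.sqrt_sq (by positivity)] at h
    have hx10 : x ≤ 1/10 := by
      rw [hxdef, div_le_iff₀ hν0]; nlinarith
    have hA := partA x t hx0 hx10 ht heq
    have hBo := partB x t hx0 hx10 ht heq
    constructor
    · rw [hm2, hm3, hm4, hs32, hm5]
      have h1 : (1 - 2*Real.sqrt s*m + 2*s*m^2 - 3/2*(s*Real.sqrt s)*m^3 + s^2*m^4)
          = (1 - 2*Real.sqrt x + 2*x - (3/2)*(x*Real.sqrt x) + x^2) := by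
        rw [hsx, hx2]; ring
      have h2 : 7*(x^2*Real.sqrt x) = 7*(s^2*Real.sqrt s)*m^5 := by rw [hsx, hx2]; ring
      calc |t - (1 - 2*Real.sqrt s*m + 2*s*m^2 - 3/2*(s*Real.sqrt s)*m^3 + s^2*m^4)|
          = |t - (1 - 2*Real.sqrt x + 2*x - (3/2)*(x*Real.sqrt x) + x^2)| := by rw [h1]
        _ ≤ 7*(x^2*Real.sqrt x) := hA
        _ = 7*(s^2*Real.sqrt s)*m^5 := h2
        _ ≤ C*m^5 := by
            apply mul_le_mul_of_nonneg_right _ (by positivity)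
            have hb0 : 0 ≤ B * (N:ℝ)^((5:ℝ)/4) := mul_nonneg hBpos.le hN54
            have hb1 : 0 ≤ s^2*Real.sqrt s := by positivity
            rw [hC]; linarith
    · rw [← htarget2, hm5]
      have h2 : 5*(x^2*Real.sqrt x) = 5*(s^2*Real.sqrt s)*m^5 := by rw [hsx, hx2]; ring
      calc |Real.log (2*(1-t)/((1+t)*Real.log (1/t))) - (-x/3 + x^2/45)|
          ≤ 5*(x^2*Real.sqrt x) := hBo
        _ = 5*(s^2*Real.sqrt s)*m^5 := h2
        _ ≤ C*m^5 := by
            apply mul_le_mul_of_nonneg_right _ (by positivity)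
            have hb0 : 0 ≤ B * (N:ℝ)^((5:ℝ)/4) := mul_nonneg hBpos.le hN54
            have hb1 : 0 ≤ s^2*Real.sqrt s := by positivity
            rw [hC]; linarith
  · -- small n : crude bounds
    push_neg at hcase
    have hnN : (n:ℝ) ≤ (N:ℝ) := by exact_mod_cast hcase.le
    have hkey : B ≤ C * (n:ℝ)^(-(5/4):ℝ) := by
      have hid : B = (B * (n:ℝ)^((5:ℝ)/4)) * (n:ℝ)^(-(5/4):ℝ) := by
        rw [mul_assoc, ← Real.rpow_add hn0]; norm_num
      rw [hid]
      apply mul_le_mul_of_nonneg_right _ (Real.rpow_pos_of_pos hn0 _).le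
      calc B * (n:ℝ)^((5:ℝ)/4) ≤ B * (N:ℝ)^((5:ℝ)/4) := by
            apply mul_le_mul_of_nonneg_left _ hBpos.le
            exact Real.rpow_le_rpow hn0.le hnN (by norm_num)
        _ ≤ C := by
            have hb1 : 0 ≤ s^2*Real.sqrt s := by positivity
            rw [hC]; linarith
    obtain ⟨ht0, ht1⟩ := ht
    have hm1 : m ≤ 1 := by rw [hm]; exact Real.rpow_le_one_of_one_le_of_nonpos hn1' (by norm_num)
    constructor
    · rw [hm2, hm3, hm4, hs32]
      have p2 : m^2 ≤ 1 := pow_le_one₀ hm0.le hm1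
      have p3 : m^3 ≤ 1 := pow_le_one₀ hm0.le hm1
      have p4 : m^4 ≤ 1 := pow_le_one₀ hm0.le hm1
      have q1 : Real.sqrt s * m ≤ Real.sqrt s := mul_le_of_le_one_right hs0 hm1
      have q2 : s * m^2 ≤ s := mul_le_of_le_one_right hs.le p2
      have q3 : (s*Real.sqrt s) * m^3 ≤ s*Real.sqrt s := mul_le_of_le_one_right (by positivity) p3
      have q4 : s^2 * m^4 ≤ s^2 := mul_le_of_le_one_right (by positivity) p4
      have q1' : 0 ≤ Real.sqrt s * m := by positivity
      have q2' : 0 ≤ s * m^2 := by positivity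
      have q3' : 0 ≤ (s*Real.sqrt s) * m^3 := by positivity
      have q4' : 0 ≤ s^2 * m^4 := by positivity
      have habs : |t - (1 - 2*Real.sqrt s*m + 2*s*m^2 - 3/2*(s*Real.sqrt s)*m^3 + s^2*m^4)| ≤ B := by
        rw [hB, abs_le]
        constructor <;>
          linarith [q1, q2, q3, q4, q1', q2', q3', q4', ht0, ht1, hs0, hs.le, sq_nonneg s,
            mul_nonneg hs.le hs0]
      linarith [hkey]
    · have hFb := crudeF x t hx0 ⟨ht0, ht1⟩ heq
      have e1 : s/(3*Real.sqrt (n:ℝ)) ≤ s/3 := by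
        rw [div_le_div_iff₀ (by positivity) (by norm_num)]; nlinarith
      have e1' : 0 ≤ s/(3*Real.sqrt (n:ℝ)) := by positivity
      have e2 : s^2/(45*(n:ℝ)) ≤ s^2/45 := by
        rw [div_le_div_iff₀ (by positivity) (by norm_num)]; nlinarith [sq_nonneg s]
      have e2' : 0 ≤ s^2/(45*(n:ℝ)) := by positivity
      have h2 : |(-s/(3*Real.sqrt (n:ℝ)) + s^2/(45*(n:ℝ)))| ≤ s/3 + s^2/45 := by
        rw [abs_le]; constructor
        · have : -s/(3*Real.sqrt (n:ℝ)) = -(s/(3*Real.sqrt (n:ℝ))) := by ring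
          rw [this]; linarith
        · have : -s/(3*Real.sqrt (n:ℝ)) = -(s/(3*Real.sqrt (n:ℝ))) := by ring
          rw [this]; linarith
      have habs : |Real.log (2*(1-t)/((1+t)*Real.log (1/t)))
          - (-s/(3*Real.sqrt (n:ℝ)) + s^2/(45*(n:ℝ)))| ≤ B := by
        calc |Real.log (2*(1-t)/((1+t)*Real.log (1/t)))
            - (-s/(3*Real.sqrt (n:ℝ)) + s^2/(45*(n:ℝ)))|
            ≤ |Real.log (2*(1-t)/((1+t)*Real.log (1/t)))|
              + |(-s/(3*Real.sqrt (n:ℝ)) + s^2/(45*(n:ℝ)))| := abs_sub _ _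
          _ ≤ (x + 3) + (s/3 + s^2/45) := add_le_add hFb h2
          _ ≤ B := by
              rw [hB]
              linarith [hxs, sq_nonneg s, hs0, mul_nonneg hs.le hs0, hs.le]
      linarith [hkey]
end
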